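/- arXiv:2112.14413 — 7 statements merged into one kernel-verified Lean document; each statement's English description precedes it below -/
import Mathlib

section
/- Let A = (a_{ij}) be a real m×n matrix, 1 ≤ p ≤ 2 and p ≤ q ≤ ∞. Then the square root of the operator norm of the Hadamard product A∘A (entrywise squares a_{ij}^2) from ℓ_{p/2}^n to ℓ_{q/2}^m equals max_{j≤n} ‖(a_{ij})_{i≤m}‖_q. -/
open MeasureTheory ProbabilityTheory
open scoped ENNReal

/-- The ℓ_p (quasi-)norm on ℝ^n, for p ∈ (0,∞]. -/
noncomputable def lpNorm (p : ℝ≥0∞) {n : ℕ} (x : Fin n → ℝ) : ℝ :=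
  if p = ⊤ then ⨆ j, |x j| else (∑ j, |x j| ^ p.toReal) ^ (1 / p.toReal)

/-- The operator (quasi-)norm of a matrix `B` acting from ℓ_p^n to ℓ_q^m. -/
noncomputable def opNorm (p q : ℝ≥0∞) {m n : ℕ} (B : Fin m → Fin n → ℝ) : ℝ :=
  sSup {c | ∃ x : Fin n → ℝ, lpNorm p x ≤ 1 ∧ c = lpNorm q (fun i => ∑ j, B i j * x j)}

lemma lpNorm_nonneg (p : ℝ≥0∞) {n : ℕ} (x : Fin n → ℝ) : 0 ≤ lpNorm p x := by
  unfold _root_.lpNorm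
  split
  · exact Real.iSup_nonneg fun j => abs_nonneg _
  · exact Real.rpow_nonneg (Finset.sum_nonneg fun j _ => Real.rpow_nonneg (abs_nonneg _) _) _

/-- `a^s ≤ a^r` when `0 ≤ a ≤ 1` and `0 < r ≤ s`. -/
lemma aux_rpow_le {a s r : ℝ} (ha : 0 ≤ a) (ha1 : a ≤ 1) (hr : 0 < r) (hrs : r ≤ s) :
    a ^ s ≤ a ^ r := by
  rcases ha.eq_or_lt with h | h
  · rw [← h, Real.zero_rpow (by linarith : s ≠ 0), Real.zero_rpow hr.ne']
  · exact Real.rpow_le_rpow_of_exponent_ge h ha1 hrs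

/-- two-term subadditivity of `x ↦ x^r` for `0 ≤ r ≤ 1` on nonneg reals -/
lemma aux_add_rpow {a b r : ℝ} (ha : 0 ≤ a) (hb : 0 ≤ b) (hr0 : 0 ≤ r) (hr1 : r ≤ 1) :
    (a + b) ^ r ≤ a ^ r + b ^ r := by
  have h := NNReal.rpow_add_le_add_rpow a.toNNReal b.toNNReal hr0 hr1
  rw [← Real.toNNReal_add ha hb] at h
  have h2 := NNReal.coe_le_coe.2 h
  rwa [NNReal.coe_add, NNReal.coe_rpow, NNReal.coe_rpow, NNReal.coe_rpow,
    Real.coe_toNNReal _ (add_nonneg ha hb), Real.coe_toNNReal _ ha, Real.coe_toNNReal _ hb] at h2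

lemma aux_sum_rpow {ι : Type*} {r : ℝ} (hr0 : 0 < r) (hr1 : r ≤ 1) (s : Finset ι)
    (f : ι → ℝ) (hf : ∀ j, 0 ≤ f j) :
    (∑ j ∈ s, f j) ^ r ≤ ∑ j ∈ s, f j ^ r := by
  classical
  induction s using Finset.induction with
  | empty => simp [Real.zero_rpow hr0.ne']
  | insert a s ha ih =>
    rw [Finset.sum_insert ha, Finset.sum_insert ha]
    calc (f a + ∑ j ∈ s, f j) ^ r ≤ f a ^ r + (∑ j ∈ s, f j) ^ r :=
          aux_add_rpow (hf a) (Finset.sum_nonneg fun j _ => hf j) hr0.le hr1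
      _ ≤ f a ^ r + ∑ j ∈ s, f j ^ r := by linarith

/-- Minkowski inequality for finite sums of nonneg vectors. -/
lemma aux_mink {m : ℕ} {ι : Type*} {r : ℝ} (hr : 1 ≤ r) (s : Finset ι) (g : ι → Fin m → ℝ)
    (hg : ∀ j i, 0 ≤ g j i) :
    (∑ i, (∑ j ∈ s, g j i) ^ r) ^ (1/r) ≤ ∑ j ∈ s, (∑ i, g j i ^ r) ^ (1/r) := by
  classical
  have hr0 : r ≠ 0 := by linarith
  induction s using Finset.induction with
  | empty =>
    simp [Real.zero_rpow hr0, one_div, Real.zero_rpow (inv_ne_zero hr0)]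
  | insert a s ha ih =>
    rw [Finset.sum_insert ha]
    calc (∑ i, (∑ j ∈ insert a s, g j i) ^ r) ^ (1/r)
        = (∑ i, (g a i + ∑ j ∈ s, g j i) ^ r) ^ (1/r) := by
          congr 1; exact Finset.sum_congr rfl fun i _ => by rw [Finset.sum_insert ha]
      _ ≤ (∑ i, g a i ^ r) ^ (1/r) + (∑ i, (∑ j ∈ s, g j i) ^ r) ^ (1/r) :=
          Real.Lp_add_le_of_nonneg (s := Finset.univ) hr (fun i _ => hg a i)
            (fun i _ => Finset.sum_nonneg fun j _ => hg j i)
      _ ≤ (∑ i, g a i ^ r) ^ (1/r) + ∑ j ∈ s, (∑ i, g j i ^ r) ^ (1/r) := by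
          exact add_le_add (le_refl _) ih

lemma aux_ciSup_attained {α : Type*} [Finite α] [Nonempty α] (f : α → ℝ) :
    ∃ i₀, (∀ i, f i ≤ f i₀) ∧ (⨆ i, f i) = f i₀ := by
  obtain ⟨i₀, h⟩ := Finite.exists_max f
  exact ⟨i₀, h, le_antisymm (ciSup_le h) (le_ciSup (Set.Finite.bddAbove (Set.finite_range f)) i₀)⟩

lemma aux_div2_top : (⊤ : ℝ≥0∞) / 2 = ⊤ := ENNReal.top_div_of_ne_top ENNReal.ofNat_ne_top

lemma aux_div2_ne_top {q : ℝ≥0∞} (hq : q ≠ ⊤) : q / 2 ≠ ⊤ := by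
  simp [ENNReal.div_eq_top, hq]

lemma aux_div2_toReal (q : ℝ≥0∞) : (q / 2).toReal = q.toReal / 2 := by
  rw [ENNReal.toReal_div]; norm_num

/-- `lpNorm` of the entrywise square. -/
lemma lpNorm_sq_eq {m : ℕ} (q : ℝ≥0∞) (hq : q ≠ 0) (v : Fin m → ℝ) :
    lpNorm (q / 2) (fun i => v i ^ 2) = (lpNorm q v) ^ 2 := by
  by_cases hqt : q = ⊤
  · subst hqt
    unfold _root_.lpNorm
    rw [if_pos aux_div2_top, if_pos rfl]
    cases isEmpty_or_nonempty (Fin m) with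
    | inl h => simp
    | inr h =>
      obtain ⟨i₀, hmax, hsup⟩ := aux_ciSup_attained (fun i => |v i|)
      have h1 : ∀ i, |v i ^ 2| ≤ |v i₀ ^ 2| := by
        intro i
        rw [abs_pow, abs_pow]
        exact pow_le_pow_left₀ (abs_nonneg _) (hmax i) 2
      have h2 : (⨆ i, |v i ^ 2|) = |v i₀ ^ 2| :=
        le_antisymm (ciSup_le h1) (le_ciSup (f := fun i => |v i ^ 2|) (Set.Finite.bddAbove (Set.finite_range _)) i₀)
      rw [h2, hsup, abs_pow, sq_abs]
  · have ht : 0 < q.toReal := ENNReal.toReal_pos hq hqt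
    set t := q.toReal with htdef
    unfold _root_.lpNorm
    rw [if_neg (aux_div2_ne_top hqt), if_neg hqt, aux_div2_toReal, ← htdef]
    have hstep : ∀ i, |v i ^ 2| ^ (t / 2) = |v i| ^ t := by
      intro i
      rw [abs_pow, ← Real.rpow_natCast (|v i|) 2, ← Real.rpow_mul (abs_nonneg _)]
      norm_num
      congr 1
      ring
    simp_rw [hstep]
    rw [← Real.rpow_natCast ((∑ i, |v i| ^ t) ^ (1 / t)) 2,
      ← Real.rpow_mul (Finset.sum_nonneg fun i _ => Real.rpow_nonneg (abs_nonneg _) _)]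
    congr 1
    field_simp
    norm_num

lemma lpNorm_single {n : ℕ} {r : ℝ} (hr0 : 0 < r) (j₀ : Fin n) :
    lpNorm (ENNReal.ofReal r) (fun j => if j = j₀ then (1:ℝ) else 0) = 1 := by
  unfold _root_.lpNorm
  rw [if_neg ENNReal.ofReal_ne_top, ENNReal.toReal_ofReal hr0.le]
  have h : ∀ j : Fin n, |if j = j₀ then (1:ℝ) else 0| ^ r = if j = j₀ then 1 else 0 := by
    intro j; split <;> simp [Real.zero_rpow hr0.ne']
  simp_rw [h]
  rw [Finset.sum_ite_eq' Finset.univ j₀ (fun _ => (1:ℝ))]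
  simp

lemma aux_sum_le_one {n : ℕ} {r : ℝ} (hr0 : 0 < r) {x : Fin n → ℝ}
    (h : lpNorm (ENNReal.ofReal r) x ≤ 1) : ∑ j, |x j| ^ r ≤ 1 := by
  unfold _root_.lpNorm at h
  rw [if_neg ENNReal.ofReal_ne_top, ENNReal.toReal_ofReal hr0.le] at h
  by_contra hc
  push_neg at hc
  have h1 : (1:ℝ) < (∑ j, |x j| ^ r) ^ (1 / r) := by
    rw [Real.one_lt_rpow_iff_of_pos (by linarith)]
    exact Or.inl ⟨hc, by positivity⟩
  linarith

lemma aux_abs_le_one {n : ℕ} {r : ℝ} (hr0 : 0 < r) {x : Fin n → ℝ}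
    (h : ∑ j, |x j| ^ r ≤ 1) (j : Fin n) : |x j| ≤ 1 := by
  have h1 : |x j| ^ r ≤ 1 := by
    refine le_trans ?_ h
    exact Finset.single_le_sum (fun j _ => Real.rpow_nonneg (abs_nonneg _) _) (Finset.mem_univ j)
  by_contra hc
  push_neg at hc
  have := (Real.one_lt_rpow_iff_of_pos (by linarith : (0:ℝ) < |x j|)).2 (Or.inl ⟨hc, hr0⟩)
  linarith

lemma lpNorm_zero_vec {m : ℕ} (s : ℝ≥0∞) (hs : s.toReal ≠ 0 ∨ s = ⊤) :
    lpNorm s (fun _ : Fin m => 0) = 0 := by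
  unfold _root_.lpNorm
  by_cases h : s = ⊤
  · rw [if_pos h]
    exact le_antisymm (Real.iSup_le (fun i => by simp) le_rfl)
      (Real.iSup_nonneg fun i => abs_nonneg _)
  · rw [if_neg h]
    have hs' : s.toReal ≠ 0 := hs.resolve_right h
    simp [Real.zero_rpow hs', one_div, Real.zero_rpow (inv_ne_zero hs')]

theorem stmt1 (m n : ℕ) (A : Fin m → Fin n → ℝ) (p : ℝ) (q : ℝ≥0∞)
    (hp1 : 1 ≤ p) (hp2 : p ≤ 2) (hpq : ENNReal.ofReal p ≤ q) :
    Real.sqrt (opNorm (ENNReal.ofReal (p / 2)) (q / 2) (fun i j => A i j ^ 2)) =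
      ⨆ j : Fin n, lpNorm q (fun i => A i j) := by
  classical
  set M := ⨆ j : Fin n, lpNorm q (fun i => A i j) with hMdef
  have hM0 : 0 ≤ M := Real.iSup_nonneg fun j => lpNorm_nonneg _ _
  have hr0 : 0 < p / 2 := by linarith
  have hr1 : p / 2 ≤ 1 := by linarith
  have hq0 : q ≠ 0 := by
    intro h
    rw [h, le_zero_iff, ENNReal.ofReal_eq_zero] at hpq
    linarith
  have hcol : ∀ j, lpNorm q (fun i => A i j) ≤ M :=
    fun j => le_ciSup (f := fun j => lpNorm q fun i => A i j)
      (Set.Finite.bddAbove (Set.finite_range _)) j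
  -- upper bound
  have key : ∀ x : Fin n → ℝ, lpNorm (ENNReal.ofReal (p / 2)) x ≤ 1 →
      lpNorm (q / 2) (fun i => ∑ j, A i j ^ 2 * x j) ≤ M ^ 2 := by
    intro x hx
    have hsum : ∑ j, |x j| ^ (p / 2) ≤ 1 := aux_sum_le_one hr0 hx
    have hxle : ∀ j, |x j| ≤ 1 := aux_abs_le_one hr0 hsum
    have hsum' : ∀ s : ℝ, p / 2 ≤ s → ∑ j, |x j| ^ s ≤ 1 :=
      fun s hs => le_trans
        (Finset.sum_le_sum fun j _ => aux_rpow_le (abs_nonneg _) (hxle j) hr0 hs) hsum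
    have hsum1 : ∑ j, |x j| ≤ 1 := by
      have := hsum' 1 hr1
      simpa using this
    have hAbs : ∀ i, |∑ j, A i j ^ 2 * x j| ≤ ∑ j, A i j ^ 2 * |x j| := by
      intro i
      refine (Finset.abs_sum_le_sum_abs _ _).trans (le_of_eq ?_)
      exact Finset.sum_congr rfl fun j _ => by rw [abs_mul, abs_of_nonneg (sq_nonneg _)]
    by_cases hqt : q = ⊤
    · subst hqt
      unfold _root_.lpNorm
      rw [if_pos aux_div2_top]
      refine Real.iSup_le (fun i => ?_) (by positivity)
      have hAij : ∀ j, A i j ^ 2 ≤ M ^ 2 := by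
        intro j
        have h1 : |A i j| ≤ lpNorm ⊤ (fun i => A i j) := by
          unfold _root_.lpNorm
          rw [if_pos rfl]
          exact le_ciSup (f := fun i' => |A i' j|)
            (Set.Finite.bddAbove (Set.finite_range _)) i
        have h2 : |A i j| ≤ M := h1.trans (hcol j)
        calc A i j ^ 2 = |A i j| ^ 2 := (sq_abs _).symm
          _ ≤ M ^ 2 := pow_le_pow_left₀ (abs_nonneg _) h2 2
      calc |∑ j, A i j ^ 2 * x j| ≤ ∑ j, A i j ^ 2 * |x j| := hAbs i
        _ ≤ ∑ j, M ^ 2 * |x j| := Finset.sum_le_sum fun j _ =>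
            mul_le_mul_of_nonneg_right (hAij j) (abs_nonneg _)
        _ = M ^ 2 * ∑ j, |x j| := by rw [Finset.mul_sum]
        _ ≤ M ^ 2 * 1 := mul_le_mul_of_nonneg_left hsum1 (by positivity)
        _ = M ^ 2 := mul_one _
    · -- q finite
      have ht0 : 0 < q.toReal := ENNReal.toReal_pos hq0 hqt
      set t := q.toReal with htdef
      have htp : p ≤ t := by
        rw [htdef]
        exact (ENNReal.ofReal_le_iff_le_toReal hqt).1 hpq
      have ht1 : 1 ≤ t := le_trans hp1 htp
      have hcolT : ∀ j, ∑ i, |A i j| ^ t ≤ M ^ t := by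
        intro j
        have hnn : (0:ℝ) ≤ ∑ i, |A i j| ^ t :=
          Finset.sum_nonneg fun i _ => Real.rpow_nonneg (abs_nonneg _) _
        have h1 : (∑ i, |A i j| ^ t) ^ (1 / t) ≤ M := by
          have h := hcol j
          unfold _root_.lpNorm at h
          rwa [if_neg hqt] at h
        have h2 := Real.rpow_le_rpow (Real.rpow_nonneg hnn _) h1 ht0.le
        rwa [← Real.rpow_mul hnn, one_div, inv_mul_cancel₀ ht0.ne', Real.rpow_one] at h2
      unfold _root_.lpNorm
      rw [if_neg (aux_div2_ne_top hqt), aux_div2_toReal, ← htdef]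
      set r2 := t / 2 with hr2def
      have hr20 : 0 < r2 := by rw [hr2def]; linarith
      have hpow : ∀ i j, (A i j ^ 2 * |x j|) ^ r2 = |A i j| ^ t * |x j| ^ r2 := by
        intro i j
        rw [Real.mul_rpow (sq_nonneg _) (abs_nonneg _), ← sq_abs (A i j),
          ← Real.rpow_natCast |A i j| 2, ← Real.rpow_mul (abs_nonneg _)]
        congr 2
        push_cast
        rw [hr2def]; ring
      have hMroot : (M ^ t) ^ (1 / r2) = M ^ 2 := by
        rw [← Real.rpow_mul hM0, ← Real.rpow_natCast M 2]
        congr 1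
        push_cast
        field_simp [hr2def]
        rw [hr2def]; ring
      have hMt0 : (0:ℝ) ≤ M ^ t := Real.rpow_nonneg hM0 _
      by_cases hr21 : 1 ≤ r2
      · -- Minkowski case
        have step1 : (∑ i, |∑ j, A i j ^ 2 * x j| ^ r2) ^ (1 / r2) ≤
            (∑ i, (∑ j, A i j ^ 2 * |x j|) ^ r2) ^ (1 / r2) := by
          apply Real.rpow_le_rpow
            (Finset.sum_nonneg fun i _ => Real.rpow_nonneg (abs_nonneg _) _)
            (Finset.sum_le_sum fun i _ =>
              Real.rpow_le_rpow (abs_nonneg _) (hAbs i) hr20.le)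
            (by positivity)
        have step2 := aux_mink hr21 Finset.univ (fun j i => A i j ^ 2 * |x j|)
          (fun j i => mul_nonneg (sq_nonneg _) (abs_nonneg _))
        have step3 : ∀ j, (∑ i, (A i j ^ 2 * |x j|) ^ r2) ^ (1 / r2) ≤ M ^ 2 * |x j| := by
          intro j
          have h1 : ∑ i, (A i j ^ 2 * |x j|) ^ r2 ≤ M ^ t * |x j| ^ r2 := by
            calc ∑ i, (A i j ^ 2 * |x j|) ^ r2 = ∑ i, |A i j| ^ t * |x j| ^ r2 := by
                  exact Finset.sum_congr rfl fun i _ => hpow i j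
              _ = (∑ i, |A i j| ^ t) * |x j| ^ r2 := by rw [← Finset.sum_mul]
              _ ≤ M ^ t * |x j| ^ r2 :=
                  mul_le_mul_of_nonneg_right (hcolT j) (Real.rpow_nonneg (abs_nonneg _) _)
          calc (∑ i, (A i j ^ 2 * |x j|) ^ r2) ^ (1 / r2)
              ≤ (M ^ t * |x j| ^ r2) ^ (1 / r2) :=
                Real.rpow_le_rpow
                  (Finset.sum_nonneg fun i _ =>
                    Real.rpow_nonneg (mul_nonneg (sq_nonneg _) (abs_nonneg _)) _)
                  h1 (by positivity)
            _ = M ^ 2 * |x j| := by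
                rw [Real.mul_rpow hMt0 (Real.rpow_nonneg (abs_nonneg _) _), hMroot,
                  ← Real.rpow_mul (abs_nonneg _), mul_one_div_cancel hr20.ne',
                  Real.rpow_one]
        calc (∑ i, |∑ j, A i j ^ 2 * x j| ^ r2) ^ (1 / r2)
            ≤ (∑ i, (∑ j, A i j ^ 2 * |x j|) ^ r2) ^ (1 / r2) := step1
          _ ≤ ∑ j, (∑ i, (A i j ^ 2 * |x j|) ^ r2) ^ (1 / r2) := step2
          _ ≤ ∑ j, M ^ 2 * |x j| := Finset.sum_le_sum fun j _ => step3 j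
          _ = M ^ 2 * ∑ j, |x j| := by rw [Finset.mul_sum]
          _ ≤ M ^ 2 * 1 := mul_le_mul_of_nonneg_left hsum1 (by positivity)
          _ = M ^ 2 := mul_one _
      · -- subadditivity case
        push_neg at hr21
        have hrr2 : p / 2 ≤ r2 := by rw [hr2def]; linarith
        have hmain : ∑ i, |∑ j, A i j ^ 2 * x j| ^ r2 ≤ M ^ t := by
          calc ∑ i, |∑ j, A i j ^ 2 * x j| ^ r2
              ≤ ∑ i, (∑ j, A i j ^ 2 * |x j|) ^ r2 :=
                Finset.sum_le_sum fun i _ =>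
                  Real.rpow_le_rpow (abs_nonneg _) (hAbs i) hr20.le
            _ ≤ ∑ i, ∑ j, (A i j ^ 2 * |x j|) ^ r2 :=
                Finset.sum_le_sum fun i _ =>
                  aux_sum_rpow hr20 hr21.le Finset.univ _
                    (fun j => mul_nonneg (sq_nonneg _) (abs_nonneg _))
            _ = ∑ j, ∑ i, (A i j ^ 2 * |x j|) ^ r2 := Finset.sum_comm
            _ = ∑ j, (∑ i, |A i j| ^ t) * |x j| ^ r2 := by
                refine Finset.sum_congr rfl fun j _ => ?_
                rw [show ∑ i, (A i j ^ 2 * |x j|) ^ r2 = ∑ i, |A i j| ^ t * |x j| ^ r2 from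
                  Finset.sum_congr rfl fun i _ => hpow i j, ← Finset.sum_mul]
            _ ≤ ∑ j, M ^ t * |x j| ^ r2 := Finset.sum_le_sum fun j _ =>
                mul_le_mul_of_nonneg_right (hcolT j) (Real.rpow_nonneg (abs_nonneg _) _)
            _ = M ^ t * ∑ j, |x j| ^ r2 := by rw [Finset.mul_sum]
            _ ≤ M ^ t * 1 := mul_le_mul_of_nonneg_left (hsum' r2 hrr2) hMt0
            _ = M ^ t := mul_one _
        calc (∑ i, |∑ j, A i j ^ 2 * x j| ^ r2) ^ (1 / r2)
            ≤ (M ^ t) ^ (1 / r2) :=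
              Real.rpow_le_rpow
                (Finset.sum_nonneg fun i _ => Real.rpow_nonneg (abs_nonneg _) _)
                hmain (by positivity)
          _ = M ^ 2 := hMroot
  -- the supremum is attained
  have hmem : M ^ 2 ∈ {c | ∃ x : Fin n → ℝ, lpNorm (ENNReal.ofReal (p / 2)) x ≤ 1 ∧
      c = lpNorm (q / 2) (fun i => ∑ j, A i j ^ 2 * x j)} := by
    have hq2 : (q / 2).toReal ≠ 0 ∨ q / 2 = ⊤ := by
      by_cases hqt : q = ⊤
      · exact Or.inr (by rw [hqt]; exact aux_div2_top)
      · left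
        rw [aux_div2_toReal]
        have := ENNReal.toReal_pos hq0 hqt
        positivity
    rcases Nat.eq_zero_or_pos n with hn | hn
    · subst hn
      refine ⟨fun _ => 0, ?_, ?_⟩
      · rw [lpNorm_zero_vec _ (Or.inl (by rw [ENNReal.toReal_ofReal hr0.le]; exact hr0.ne'))]
        exact zero_le_one
      · have himg : (fun i => ∑ j : Fin 0, A i j ^ 2 * 0) = fun _ : Fin m => (0:ℝ) := by
          funext i; simp
        rw [himg, lpNorm_zero_vec _ hq2]
        have hM : M = 0 := by rw [hMdef]; exact Real.iSup_of_isEmpty _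
        rw [hM]; ring
    · have : Nonempty (Fin n) := Fin.pos_iff_nonempty.1 hn
      obtain ⟨j₀, -, hsup⟩ := aux_ciSup_attained (fun j => lpNorm q (fun i => A i j))
      refine ⟨fun j => if j = j₀ then 1 else 0, le_of_eq (lpNorm_single hr0 j₀), ?_⟩
      have himg : (fun i => ∑ j, A i j ^ 2 * (if j = j₀ then (1:ℝ) else 0)) =
          fun i => A i j₀ ^ 2 := by
        funext i
        simp [mul_ite, mul_one, mul_zero, Finset.sum_ite_eq']
      rw [himg, lpNorm_sq_eq q hq0, hMdef, hsup]
  have hub : M ^ 2 ∈ upperBounds {c | ∃ x : Fin n → ℝ,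
      lpNorm (ENNReal.ofReal (p / 2)) x ≤ 1 ∧
      c = lpNorm (q / 2) (fun i => ∑ j, A i j ^ 2 * x j)} := by
    rintro c ⟨x, hx, rfl⟩
    exact key x hx
  have hop : opNorm (ENNReal.ofReal (p / 2)) (q / 2) (fun i j => A i j ^ 2) =
      sSup {c | ∃ x : Fin n → ℝ, lpNorm (ENNReal.ofReal (p / 2)) x ≤ 1 ∧
        c = lpNorm (q / 2) (fun i => ∑ j, A i j ^ 2 * x j)} := rfl
  rw [hop, IsGreatest.csSup_eq ⟨hmem, hub⟩, Real.sqrt_sq hM0]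
end

section
/- Fix 1 ≤ p ≤ ∞ and n ∈ ℕ. Let K be the convex hull of all vectors of the form |J|^{-1/p} (ε_j 1_{j∈J})_{j=1}^n, where J ranges over non-empty subsets of {1,…,n} and ε ∈ {−1,1}^n. Then B_p^n ⊆ (ln(en))^{1/p*} K, where p* is the Hölder conjugate of p. -/
open MeasureTheory ProbabilityTheory
open scoped ENNReal Pointwise

/-- The polytope `K`: convex hull of the vectors `|J|^{-1/p} (ε_j 1_{j ∈ J})_j`
over nonempty `J ⊆ {1,…,n}` and signs `ε ∈ {-1,1}^n`. -/
noncomputable def Kset (p : ℝ≥0∞) (n : ℕ) : Set (Fin n → ℝ) :=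
  convexHull ℝ { x | ∃ (J : Finset (Fin n)) (ε : Fin n → ℝ), J.Nonempty ∧
    (∀ j, ε j = 1 ∨ ε j = -1) ∧
    ∀ j, x j = (J.card : ℝ) ^ (-(1 / p.toReal)) * (if j ∈ J then ε j else 0) }

lemma rpow_succ_sub_le (k : ℕ) {r : ℝ} (hr0 : 0 < r) (hr1 : r ≤ 1) :
    ((k + 1 : ℕ) : ℝ) ^ r - (k : ℝ) ^ r ≤ ((k + 1 : ℕ) : ℝ) ^ (r - 1) := by
  rcases Nat.eq_zero_or_pos k with hk | hk
  · subst hk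
    simp [Real.zero_rpow hr0.ne', Real.one_rpow]
  · have hK : (0:ℝ) < (k:ℝ) := by exact_mod_cast hk
    have hK1 : (0:ℝ) < ((k+1:ℕ):ℝ) := by positivity
    have h1 : ((k+1:ℕ):ℝ) ^ r = ((k+1:ℕ):ℝ) ^ (r-1) * ((k+1:ℕ):ℝ) := by
      rw [← Real.rpow_add_one hK1.ne' (r-1)]; ring_nf
    have h2 : (k:ℝ) ^ r = (k:ℝ) ^ (r-1) * (k:ℝ) := by
      rw [← Real.rpow_add_one hK.ne' (r-1)]; ring_nf
    have h3 : ((k+1:ℕ):ℝ) ^ (r-1) ≤ (k:ℝ) ^ (r-1) := by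
      apply Real.rpow_le_rpow_of_nonpos hK _ (by linarith)
      push_cast; linarith
    have h4 : ((k+1:ℕ):ℝ) ^ (r-1) * (k:ℝ) ≤ (k:ℝ) ^ (r-1) * (k:ℝ) :=
      mul_le_mul_of_nonneg_right h3 hK.le
    have h5 : ((k+1:ℕ):ℝ) = (k:ℝ) + 1 := by push_cast; ring
    have h6 : ((k+1:ℕ):ℝ) ^ (r-1) * ((k+1:ℕ):ℝ)
        = ((k+1:ℕ):ℝ) ^ (r-1) * (k:ℝ) + ((k+1:ℕ):ℝ) ^ (r-1) := by rw [h5]; ring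
    linarith [h1, h2, h4, h6]

lemma sum_inv_le_log (n : ℕ) (hn : 1 ≤ n) :
    ∑ k ∈ Finset.range n, (((k + 1 : ℕ) : ℝ))⁻¹ ≤ Real.log (Real.exp 1 * n) := by
  have h1 : ∑ k ∈ Finset.range n, (((k + 1 : ℕ) : ℝ))⁻¹ = ((harmonic n : ℚ) : ℝ) := by
    rw [harmonic]; push_cast; ring
  rw [h1, Real.log_mul (Real.exp_ne_zero 1) (by positivity), Real.log_exp]
  exact harmonic_le_one_add_log n

theorem stmt2 (p : ℝ≥0∞) (hp : 1 ≤ p) (n : ℕ) (hn : 1 ≤ n) :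
    {x : Fin n → ℝ | lpNorm p x ≤ 1} ⊆
      (Real.log (Real.exp 1 * n)) ^ (1 - 1 / p.toReal) • Kset p n := by
  intro x hx
  simp only [Set.mem_setOf_eq] at hx
  have hn0 : 0 < n := hn
  have hnR : (1:ℝ) ≤ (n:ℝ) := by exact_mod_cast hn
  set r : ℝ := 1 / p.toReal with hr
  set L : ℝ := Real.log (Real.exp 1 * n) with hL
  have hLeq : L = 1 + Real.log n := by
    rw [hL, Real.log_mul (Real.exp_ne_zero 1) (by positivity), Real.log_exp]
  have hL1 : (1:ℝ) ≤ L := by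
    have := Real.log_nonneg hnR
    rw [hLeq]; linarith
  have hL0 : (0:ℝ) < L := lt_of_lt_of_le one_pos hL1
  set C : ℝ := L ^ (1 - r) with hC
  have hr0 : 0 ≤ r := by rw [hr]; positivity
  have hr1 : r ≤ 1 := by
    rcases eq_or_ne p ⊤ with h | h
    · simp [hr, h]
    · have h1 : 1 ≤ p.toReal := by
        rw [← ENNReal.toReal_one]; exact ENNReal.toReal_mono h hp
      rw [hr, div_le_one (by linarith)]; linarith
  have hC0 : (0:ℝ) < C := Real.rpow_pos_of_pos hL0 _
  -- sorting
  set σ : Equiv.Perm (Fin n) := Tuple.sort (fun j => -|x j|) with hσ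
  set a : ℕ → ℝ := fun k => if h : k < n then |x (σ ⟨k, h⟩)| else 0 with ha
  have ha_nonneg : ∀ k, 0 ≤ a k := by
    intro k; rw [ha]; dsimp only; split
    · positivity
    · exact le_refl 0
  have ha_val : ∀ (i : Fin n), a i.val = |x (σ i)| := by
    intro i; rw [ha]; dsimp only; rw [dif_pos i.isLt]
  have ha_anti : ∀ k, a (k + 1) ≤ a k := by
    intro k
    rcases lt_or_ge (k+1) n with h | h
    · have hk : k < n := by omega
      have hmono := Tuple.monotone_sort (fun j => -|x j|)
        (show (⟨k, hk⟩ : Fin n) ≤ ⟨k+1, h⟩ from by simp [Fin.le_def])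
      simp only [Function.comp_apply] at hmono
      rw [ha]; dsimp only; rw [dif_pos h, dif_pos hk]
      linarith
    · rw [ha]; dsimp only; rw [dif_neg (by omega)]
      exact ha_nonneg k
  have ha_top : a n = 0 := by rw [ha]; dsimp only; rw [dif_neg (lt_irrefl n)]
  -- signs
  set ε : Fin n → ℝ := fun j => if x j < 0 then -1 else 1 with hε
  have hε_pm : ∀ j, ε j = 1 ∨ ε j = -1 := by
    intro j; rw [hε]; dsimp only; split
    · right; rfl
    · left; rfl
  have hε_sign : ∀ j, ε j * |x j| = x j := by
    intro j; rw [hε]; dsimp only; split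
    · rename_i h; rw [abs_of_neg h]; ring
    · rename_i h; rw [abs_of_nonneg (not_lt.mp h)]; ring
  -- the supports
  set J : ℕ → Finset (Fin n) := fun k => Finset.univ.filter (fun j => ((σ.symm j : Fin n) : ℕ) ≤ k)
    with hJ
  have hJmem : ∀ k j, j ∈ J k ↔ ((σ.symm j : Fin n) : ℕ) ≤ k := by
    intro k j; rw [hJ]; simp
  have hJne : ∀ k, (J k).Nonempty := by
    intro k
    refine ⟨σ ⟨0, hn0⟩, ?_⟩
    rw [hJmem]; simp
  have hJcard : ∀ k, k < n → ((J k).card : ℝ) = ((k+1 : ℕ) : ℝ) := by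
    intro k hk
    have h1 : (J k).card = (Finset.Iic (⟨k, hk⟩ : Fin n)).card := by
      apply Finset.card_equiv σ.symm
      intro j
      rw [hJmem]
      simp [Fin.le_def]
    rw [h1, Fin.card_Iic]
  -- vertices and coefficients
  set w : ℕ → Fin n → ℝ :=
    fun k j => ((J k).card : ℝ) ^ (-(1 / p.toReal)) * (if j ∈ J k then ε j else 0) with hw
  set lam : ℕ → ℝ := fun k => (a k - a (k + 1)) * ((k + 1 : ℕ) : ℝ) ^ r with hlam
  have hlam_nonneg : ∀ k, 0 ≤ lam k := by
    intro k
    exact mul_nonneg (sub_nonneg.2 (ha_anti k)) (Real.rpow_nonneg (by positivity) _)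
  set c : ℝ := ∑ k ∈ Finset.range n, lam k with hc
  have hc0 : 0 ≤ c := Finset.sum_nonneg fun k _ => hlam_nonneg k
  -- decomposition
  have hx_sum : x = ∑ k ∈ Finset.range n, lam k • w k := by
    funext j
    rw [Finset.sum_apply]
    set m : ℕ := ((σ.symm j : Fin n) : ℕ) with hm
    have hmn : m < n := (σ.symm j).isLt
    have hterm : ∀ k ∈ Finset.range n,
        (lam k • w k) j = if m ≤ k then (a k - a (k + 1)) * ε j else 0 := by
      intro k hk
      rw [Finset.mem_range] at hk
      have hpos : (0:ℝ) < ((k+1:ℕ):ℝ) := by positivity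
      have hpow : ((k+1:ℕ):ℝ) ^ r * ((k+1:ℕ):ℝ) ^ (-(1 / p.toReal)) = 1 := by
        rw [← Real.rpow_add hpos]
        have hz : r + -(1 / p.toReal) = 0 := by rw [hr]; ring
        rw [hz, Real.rpow_zero]
      show lam k * w k j = _
      rw [hlam, hw]; dsimp only
      rw [hJcard k hk]
      by_cases hjk : j ∈ J k
      · rw [if_pos hjk, if_pos ((hJmem k j).mp hjk)]
        linear_combination ((a k - a (k + 1)) * ε j) * hpow
      · rw [if_neg hjk, if_neg (fun h => hjk ((hJmem k j).mpr h))]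
        ring
    rw [Finset.sum_congr rfl hterm]
    have hfilter : (Finset.range n).filter (fun k => m ≤ k) = Finset.Ico m n := by
      ext k
      simp only [Finset.mem_filter, Finset.mem_range, Finset.mem_Ico]
      omega
    rw [← Finset.sum_filter, hfilter, ← Finset.sum_mul,
        Finset.sum_Ico_eq_sub _ hmn.le, Finset.sum_range_sub' a, Finset.sum_range_sub' a,
        ha_top]
    have ham : a m = |x j| := by
      have h1 := ha_val (σ.symm j)
      rwa [Equiv.apply_symm_apply] at h1
    rw [hm, ham]
    linear_combination -hε_sign j
  -- main bound
  have hcC : c ≤ C := by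
    rcases eq_or_ne p ⊤ with htop | htop
    · -- p = ∞
      have hr' : r = 0 := by rw [hr, htop]; simp
      have hclam : c = a 0 := by
        have h1 : ∀ k ∈ Finset.range n, lam k = a k - a (k + 1) := by
          intro k _; rw [hlam]; dsimp only; rw [hr', Real.rpow_zero, mul_one]
        rw [hc, Finset.sum_congr rfl h1, Finset.sum_range_sub' a, ha_top, sub_zero]
      have hsup : a 0 ≤ 1 := by
        have h1 : a 0 = |x (σ ⟨0, hn0⟩)| := ha_val ⟨0, hn0⟩
        have h2 : |x (σ ⟨0, hn0⟩)| ≤ ⨆ j, |x j| :=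
          le_ciSup (f := fun j => |x j|) (Finite.bddAbove_range _) (σ ⟨0, hn0⟩)
        rw [_root_.lpNorm, if_pos htop] at hx
        linarith
      rw [hclam, hC, hr', sub_zero, Real.rpow_one]
      linarith
    · -- p finite
      have hpt1 : 1 ≤ p.toReal := by
        rw [← ENNReal.toReal_one]; exact ENNReal.toReal_mono htop hp
      have hpt0 : 0 < p.toReal := by linarith
      have hrpos : 0 < r := by rw [hr]; positivity
      have hS : ∑ j, |x j| ^ p.toReal ≤ 1 := by
        rw [_root_.lpNorm, if_neg htop] at hx
        by_contra hcon
        push_neg at hcon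
        have h2 : (1:ℝ) < (∑ j, |x j| ^ p.toReal) ^ (1 / p.toReal) := by
          have h3 := Real.rpow_lt_rpow (by norm_num) hcon
            (by positivity : (0:ℝ) < 1 / p.toReal)
          rwa [Real.one_rpow] at h3
        linarith
      have hsum_eq : ∀ g : ℝ → ℝ, ∑ k ∈ Finset.range n, g (a k) = ∑ j, g (|x j|) := by
        intro g
        rw [← Fin.sum_univ_eq_sum_range (fun k => g (a k)) n,
          ← Equiv.sum_comp σ (fun j => g (|x j|))]
        exact Finset.sum_congr rfl fun i _ => by rw [ha_val i]
      have hAbel : c = ∑ k ∈ Finset.range n, a k * (((k+1:ℕ):ℝ) ^ r - ((k:ℕ):ℝ) ^ r) := by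
        have hbn : a n * ((n:ℕ):ℝ) ^ r = 0 := by rw [ha_top, zero_mul]
        have hb0 : a 0 * ((0:ℕ):ℝ) ^ r = 0 := by
          norm_num [Real.zero_rpow hrpos.ne']
        have hshift : ∑ k ∈ Finset.range n, a (k+1) * ((k+1:ℕ):ℝ) ^ r
            = ∑ k ∈ Finset.range n, a k * ((k:ℕ):ℝ) ^ r := by
          have h3 := Finset.sum_range_succ' (fun k => a k * ((k:ℕ):ℝ) ^ r) n
          have h4 := Finset.sum_range_succ (fun k => a k * ((k:ℕ):ℝ) ^ r) n
          rw [h4] at h3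
          linarith [h3]
        calc c = ∑ k ∈ Finset.range n,
              (a k * ((k+1:ℕ):ℝ) ^ r - a (k+1) * ((k+1:ℕ):ℝ) ^ r) := by
              rw [hc]; exact Finset.sum_congr rfl fun k _ => by rw [hlam]; ring
          _ = ∑ k ∈ Finset.range n, a k * ((k+1:ℕ):ℝ) ^ r
              - ∑ k ∈ Finset.range n, a (k+1) * ((k+1:ℕ):ℝ) ^ r := Finset.sum_sub_distrib _ _
          _ = ∑ k ∈ Finset.range n, a k * ((k+1:ℕ):ℝ) ^ r
              - ∑ k ∈ Finset.range n, a k * ((k:ℕ):ℝ) ^ r := by rw [hshift]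
          _ = ∑ k ∈ Finset.range n, a k * (((k+1:ℕ):ℝ) ^ r - ((k:ℕ):ℝ) ^ r) := by
              rw [← Finset.sum_sub_distrib]
              exact Finset.sum_congr rfl fun k _ => by ring
      rcases eq_or_lt_of_le hpt1 with hpt | hpt
      · -- p.toReal = 1
        have hr' : r = 1 := by rw [hr, ← hpt]; norm_num
        have h1 : c = ∑ k ∈ Finset.range n, a k := by
          rw [hAbel]
          refine Finset.sum_congr rfl fun k _ => ?_
          rw [hr', Real.rpow_one, Real.rpow_one]
          push_cast; ring
        have h2 : ∑ k ∈ Finset.range n, a k = ∑ j, |x j| := hsum_eq (fun t => t)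
        have h3 : ∑ j, |x j| ≤ 1 := by
          have h4 : ∀ j : Fin n, |x j| ^ p.toReal = |x j| := by
            intro j; rw [← hpt, Real.rpow_one]
          calc ∑ j, |x j| = ∑ j, |x j| ^ p.toReal := by
                exact Finset.sum_congr rfl fun j _ => (h4 j).symm
            _ ≤ 1 := hS
        rw [hC, hr', sub_self, Real.rpow_zero]
        linarith
      · -- 1 < p.toReal
        set q : ℝ := Real.conjExponent p.toReal with hq
        have hpq : p.toReal.HolderConjugate q := Real.HolderConjugate.conjExponent hpt
        have hstep1 : c ≤ ∑ k ∈ Finset.range n, a k * ((k+1:ℕ):ℝ) ^ (r-1) := by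
          rw [hAbel]
          exact Finset.sum_le_sum fun k _ =>
            mul_le_mul_of_nonneg_left (rpow_succ_sub_le k hrpos hr1) (ha_nonneg k)
        have hHolder : ∑ k ∈ Finset.range n, a k * ((k+1:ℕ):ℝ) ^ (r-1) ≤
            (∑ k ∈ Finset.range n, a k ^ p.toReal) ^ (1 / p.toReal) *
            (∑ k ∈ Finset.range n, (((k+1:ℕ):ℝ) ^ (r-1)) ^ q) ^ (1 / q) :=
          Real.inner_le_Lp_mul_Lq_of_nonneg (s := Finset.range n) hpq
            (fun k _ => ha_nonneg k) (fun k _ => Real.rpow_nonneg (by positivity) _)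
        have hA : (∑ k ∈ Finset.range n, a k ^ p.toReal) ^ (1 / p.toReal) ≤ 1 := by
          have h1 : ∑ k ∈ Finset.range n, a k ^ p.toReal = ∑ j, |x j| ^ p.toReal :=
            hsum_eq (fun t => t ^ p.toReal)
          rw [h1]
          exact Real.rpow_le_one
            (Finset.sum_nonneg fun j _ => Real.rpow_nonneg (abs_nonneg _) _) hS (by positivity)
        have hq0 : 0 < q := hpq.symm.pos
        have hrq : (r - 1) * q = -1 := by
          have h1 : r - 1 = -q⁻¹ := by rw [hr, one_div]; exact hpq.inv_sub_one
          rw [h1]; field_simp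
        have hB : (∑ k ∈ Finset.range n, (((k+1:ℕ):ℝ) ^ (r-1)) ^ q) ^ (1 / q) ≤ C := by
          have h1 : ∀ k ∈ Finset.range n, (((k+1:ℕ):ℝ) ^ (r-1)) ^ q = (((k+1:ℕ):ℝ))⁻¹ := by
            intro k _
            rw [← Real.rpow_mul (by positivity : (0:ℝ) ≤ ((k+1:ℕ):ℝ)), hrq, Real.rpow_neg_one]
          rw [Finset.sum_congr rfl h1]
          have h3 : (∑ k ∈ Finset.range n, (((k+1:ℕ):ℝ))⁻¹) ^ (1/q) ≤ L ^ (1/q) :=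
            Real.rpow_le_rpow (Finset.sum_nonneg fun k _ => by positivity)
              (by rw [hL]; exact sum_inv_le_log n hn) (by positivity)
          have h4 : (1:ℝ)/q = 1 - r := by
            rw [one_div, hr, one_div, ← hpq.one_sub_inv]
          rw [hC, ← h4]
          exact h3
        have hBnn : 0 ≤ (∑ k ∈ Finset.range n, (((k+1:ℕ):ℝ) ^ (r-1)) ^ q) ^ (1 / q) :=
          Real.rpow_nonneg
            (Finset.sum_nonneg fun k _ => Real.rpow_nonneg (Real.rpow_nonneg (by positivity) _) _) _
        calc c ≤ ∑ k ∈ Finset.range n, a k * ((k+1:ℕ):ℝ) ^ (r-1) := hstep1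
          _ ≤ (∑ k ∈ Finset.range n, a k ^ p.toReal) ^ (1 / p.toReal) *
              (∑ k ∈ Finset.range n, (((k+1:ℕ):ℝ) ^ (r-1)) ^ q) ^ (1 / q) := hHolder
          _ ≤ 1 * C := mul_le_mul hA hB hBnn (by norm_num)
          _ = C := one_mul C
  -- assembly
  set S : Set (Fin n → ℝ) := { y | ∃ (J' : Finset (Fin n)) (ε' : Fin n → ℝ), J'.Nonempty ∧
    (∀ j, ε' j = 1 ∨ ε' j = -1) ∧
    ∀ j, y j = (J'.card : ℝ) ^ (-(1 / p.toReal)) * (if j ∈ J' then ε' j else 0) } with hSdef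
  have hwS : ∀ k, k < n → w k ∈ S := by
    intro k hk
    exact ⟨J k, ε, hJne k, hε_pm, fun j => rfl⟩
  have hwS' : -(w 0) ∈ S := by
    refine ⟨J 0, fun j => -(ε j), hJne 0, ?_, ?_⟩
    · intro j
      dsimp only
      rcases hε_pm j with h | h
      · right; rw [h]
      · left; rw [h]; norm_num
    · intro j
      show -(w 0 j) = _
      rw [hw]; dsimp only
      by_cases h : j ∈ J 0
      · rw [if_pos h, if_pos h]; ring
      · rw [if_neg h, if_neg h]; ring
  set P : ℕ → (Fin n → ℝ) := fun k => if k < n then w k else if k = n then w 0 else -(w 0)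
    with hP
  set μ : ℕ → ℝ := fun k => if k < n then lam k / C else (C - c) / (2 * C) with hμ
  have hμ0 : ∀ k ∈ Finset.range (n+2), 0 ≤ μ k := by
    intro k _
    rw [hμ]; dsimp only
    by_cases h : k < n
    · rw [if_pos h]; exact div_nonneg (hlam_nonneg k) hC0.le
    · rw [if_neg h]; apply div_nonneg (by linarith) (by linarith)
  have hμsum : ∑ k ∈ Finset.range (n+2), μ k = 1 := by
    rw [Finset.sum_range_succ, Finset.sum_range_succ]
    have h1 : ∀ k ∈ Finset.range n, μ k = lam k / C := by
      intro k hk; rw [Finset.mem_range] at hk; rw [hμ]; dsimp only; rw [if_pos hk]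
    have h2 : μ n = (C - c) / (2*C) := by rw [hμ]; dsimp only; rw [if_neg (lt_irrefl n)]
    have h3 : μ (n+1) = (C - c) / (2*C) := by rw [hμ]; dsimp only; rw [if_neg (by omega)]
    rw [Finset.sum_congr rfl h1, ← Finset.sum_div, ← hc, h2, h3]
    field_simp
    ring
  have hPmem : ∀ k ∈ Finset.range (n+2), P k ∈ S := by
    intro k _
    rw [hP]; dsimp only
    by_cases h : k < n
    · rw [if_pos h]; exact hwS k h
    · rw [if_neg h]
      by_cases h2 : k = n
      · rw [if_pos h2]; exact hwS 0 hn0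
      · rw [if_neg h2]; exact hwS'
  have hcm := Finset.centerMass_mem_convexHull (Finset.range (n+2)) hμ0
    (by rw [hμsum]; norm_num) hPmem
  have hcmeq : (Finset.range (n+2)).centerMass μ P = C⁻¹ • x := by
    rw [Finset.centerMass_eq_of_sum_1 _ _ hμsum]
    rw [Finset.sum_range_succ, Finset.sum_range_succ]
    have h1 : ∀ k ∈ Finset.range n, μ k • P k = C⁻¹ • (lam k • w k) := by
      intro k hk; rw [Finset.mem_range] at hk
      rw [hμ, hP]; dsimp only
      rw [if_pos hk, if_pos hk, smul_smul]
      congr 1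
      rw [div_eq_mul_inv, mul_comm]
    have h2 : μ n • P n = ((C - c)/(2*C)) • w 0 := by
      rw [hμ, hP]; dsimp only
      rw [if_neg (lt_irrefl n), if_neg (lt_irrefl n), if_pos rfl]
    have h3 : μ (n+1) • P (n+1) = -(((C - c)/(2*C)) • w 0) := by
      rw [hμ, hP]; dsimp only
      rw [if_neg (by omega : ¬ n + 1 < n), if_neg (by omega : ¬ n + 1 < n),
        if_neg (by omega : ¬ n + 1 = n), smul_neg]
    rw [Finset.sum_congr rfl h1, ← Finset.smul_sum, ← hx_sum, h2, h3]
    abel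
  have hz : C⁻¹ • x ∈ Kset p n := by
    unfold Kset
    rw [← hcmeq]
    exact hcm
  refine Set.mem_smul_set.mpr ⟨C⁻¹ • x, hz, ?_⟩
  rw [smul_smul, mul_inv_cancel₀ hC0.ne', one_smul]
end

section
/- With K as above and 1 ≤ p < ∞, the inclusion B_p^n ⊆ C·K forces C ≳_p (ln n)^{1/p*}: namely, for the vector y with y_j = j^{-1/p*} one has ‖y‖_{K}^* ≍_p 1 (where ‖·‖_K^* is the norm dual to the Minkowski gauge of K) while ‖y‖_{p*} ≍ (ln n)^{1/p*}. -/
open MeasureTheory ProbabilityTheory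
open scoped ENNReal Pointwise

/-- A strictly monotone map from `Fin k` to `Fin n` grows at least linearly. -/
private lemma fin_strictMono_le {k n : ℕ} (f : Fin k → Fin n) (hf : StrictMono f) :
    ∀ m (hm : m < k), m ≤ (f ⟨m, hm⟩ : ℕ) := by
  intro m
  induction m with
  | zero => intro hm; exact Nat.zero_le _
  | succ m ih =>
    intro hm
    have hm' : m < k := Nat.lt_of_succ_lt hm
    have h1 : f ⟨m, hm'⟩ < f ⟨m + 1, hm⟩ := hf (by simp [Fin.lt_def])
    have h2 := ih hm'
    have := Fin.lt_def.mp h1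
    omega

/-- Rearrangement: the sum of an antitone function over a finset is at most the
sum over an initial segment of the same cardinality. -/
private lemma sum_finset_le_sum_range {n : ℕ} (g : ℕ → ℝ)
    (hg : ∀ a b : ℕ, a ≤ b → g b ≤ g a) (J : Finset (Fin n)) :
    ∑ j ∈ J, g j ≤ ∑ i ∈ Finset.range J.card, g i := by
  set k := J.card with hk
  let f := J.orderEmbOfFin hk.symm
  have himg : Finset.image (fun i : Fin k => f i) Finset.univ = J := by
    apply Finset.coe_injective
    rw [Finset.coe_image, Finset.coe_univ, Set.image_univ]
    exact J.range_orderEmbOfFin hk.symm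
  have hsum : ∑ j ∈ J, g j = ∑ i : Fin k, g (f i) := by
    rw [← himg, Finset.sum_image (fun a _ b _ h => f.injective h)]
  rw [hsum]
  have hle : ∑ i : Fin k, g (f i) ≤ ∑ i : Fin k, g (i : ℕ) := by
    apply Finset.sum_le_sum
    intro i _
    exact hg _ _ (fin_strictMono_le (fun i => f i) f.strictMono i.1 i.2)
  refine hle.trans ?_
  rw [Finset.sum_range fun i => g i]

private lemma key_step (a : ℝ) (ha : 0 < a) (ha1 : a ≤ 1) (k : ℕ) :
    (k : ℝ) ^ a + a * ((k : ℝ) + 1) ^ (a - 1) ≤ ((k : ℝ) + 1) ^ a := by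
  set t : ℝ := (k : ℝ) + 1 with htdef
  have hk0 : (0 : ℝ) ≤ (k : ℝ) := Nat.cast_nonneg k
  have ht : (0 : ℝ) < t := by rw [htdef]; linarith
  have hs : (-1 : ℝ) ≤ -(1 / t) := by
    rw [neg_le_neg_iff, div_le_one ht, htdef]; linarith
  have hb := rpow_one_add_le_one_add_mul_self hs ha.le ha1
  have hone : 1 + -(1 / t) = (k : ℝ) / t := by
    field_simp
    rw [htdef]; ring
  rw [hone] at hb
  have h2 : ((k : ℝ) / t) ^ a = (k : ℝ) ^ a / t ^ a :=
    Real.div_rpow hk0 ht.le a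
  have h3 : t ^ (a - 1) = t ^ a / t := by
    rw [Real.rpow_sub ht, Real.rpow_one]
  have hta : (0 : ℝ) < t ^ a := Real.rpow_pos_of_pos ht a
  rw [h2] at hb
  have h4 : (k : ℝ) ^ a ≤ (1 + a * -(1 / t)) * t ^ a := by
    rw [← div_le_iff₀ hta]; exact hb
  have h5 : (1 + a * -(1 / t)) * t ^ a = t ^ a - a * (t ^ a / t) := by ring
  rw [h5, ← h3] at h4
  linarith

/-- Discrete integral comparison: `∑_{i<k} (i+1)^{a-1} ≤ (1/a) k^a` for `0 < a ≤ 1`. -/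
private lemma sum_rpow_le (a : ℝ) (ha : 0 < a) (ha1 : a ≤ 1) (k : ℕ) :
    ∑ i ∈ Finset.range k, ((i : ℝ) + 1) ^ (a - 1) ≤ (1 / a) * (k : ℝ) ^ a := by
  induction k with
  | zero => simp [Real.zero_rpow ha.ne']
  | succ k ih =>
    rw [Finset.sum_range_succ]
    have key := key_step a ha ha1 k
    have hmul := mul_le_mul_of_nonneg_left key (le_of_lt (one_div_pos.mpr ha))
    rw [mul_add] at hmul
    have haa : (1 / a) * (a * ((k : ℝ) + 1) ^ (a - 1)) = ((k : ℝ) + 1) ^ (a - 1) := by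
      field_simp
    rw [haa] at hmul
    push_cast
    linarith

/-- `log n` is at most the harmonic sum. -/
private lemma log_le_sum (n : ℕ) (hn : 1 ≤ n) :
    Real.log n ≤ ∑ i ∈ Finset.range n, ((i : ℝ) + 1)⁻¹ := by
  have h := log_add_one_le_harmonic n
  have heq : ((harmonic n : ℚ) : ℝ) = ∑ i ∈ Finset.range n, ((i : ℝ) + 1)⁻¹ := by
    rw [harmonic]
    push_cast
    rfl
  have hlog : Real.log n ≤ Real.log (n + 1) := by
    apply Real.log_le_log (by exact_mod_cast hn)
    linarith
  calc Real.log n ≤ Real.log (n + 1) := hlog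
    _ ≤ ((harmonic n : ℚ) : ℝ) := by exact_mod_cast h
    _ = _ := heq

/-- The factor `(ln n)^{1/p*}` in the inclusion `B_p^n ⊆ C • K` is optimal up to a
constant depending only on `p`: any positive `C` for which the inclusion holds must
satisfy `C ≥ c(p) (ln n)^{1 - 1/p}`. -/
theorem stmt3 (p : ℝ) (hp1 : 1 ≤ p) :
    ∃ c : ℝ, 0 < c ∧ ∀ n : ℕ, 1 ≤ n → ∀ C : ℝ, 0 < C →
      {x : Fin n → ℝ | lpNorm (ENNReal.ofReal p) x ≤ 1} ⊆
        C • Kset (ENNReal.ofReal p) n →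
      c * (Real.log n) ^ (1 - 1 / p) ≤ C := by
  have hp0 : (0 : ℝ) < p := lt_of_lt_of_le one_pos hp1
  refine ⟨1 / p, by positivity, ?_⟩
  intro n hn C hC hsub
  set a : ℝ := 1 / p with hadef
  have ha : 0 < a := by positivity
  have ha1 : a ≤ 1 := by rw [hadef, div_le_one hp0]; exact hp1
  have hap : a * p = 1 := by rw [hadef]; field_simp
  have htoReal : (ENNReal.ofReal p).toReal = p := ENNReal.toReal_ofReal hp0.le
  haveI : NeZero n := ⟨by omega⟩
  -- the test functional
  set y : Fin n → ℝ := fun j => ((j : ℝ) + 1) ^ (a - 1) with hydef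
  have hy0 : ∀ j, 0 ≤ y j := fun j => Real.rpow_nonneg (by positivity) _
  set φ : (Fin n → ℝ) → ℝ := fun x => ∑ j, y j * x j with hφdef
  have hφapp : ∀ x : Fin n → ℝ, φ x = ∑ j, y j * x j := fun x => rfl
  have hlin : IsLinearMap ℝ φ := by
    constructor
    · intro u v
      simp only [hφdef, Pi.add_apply, mul_add, Finset.sum_add_distrib]
    · intro c u
      simp only [hφdef, Pi.smul_apply, smul_eq_mul, Finset.mul_sum]
      exact Finset.sum_congr rfl fun j _ => by ring
  -- bound of the functional on K
  have hK : ∀ w ∈ Kset (ENNReal.ofReal p) n, φ w ≤ p := by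
    intro w hw
    have hconv : Convex ℝ {x : Fin n → ℝ | φ x ≤ p} := convex_halfSpace_le hlin p
    refine convexHull_min ?_ hconv hw
    rintro x ⟨J, ε, hJ, hε, hxj⟩
    have hcard : (0 : ℝ) < (J.card : ℝ) := by exact_mod_cast Finset.card_pos.mpr hJ
    have hterm : ∀ j, y j * x j =
        if j ∈ J then (J.card : ℝ) ^ (-a) * (y j * ε j) else 0 := by
      intro j
      rw [hxj j, htoReal, ← hadef]
      by_cases h : j ∈ J <;> simp [h] <;> ring
    have hφx : φ x = (J.card : ℝ) ^ (-a) * ∑ j ∈ J, y j * ε j := by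
      rw [hφapp]
      calc ∑ j, y j * x j
          = ∑ j, (if j ∈ J then (J.card : ℝ) ^ (-a) * (y j * ε j) else 0) :=
            Finset.sum_congr rfl fun j _ => hterm j
        _ = ∑ j ∈ J, (J.card : ℝ) ^ (-a) * (y j * ε j) := by
            rw [Finset.sum_ite_mem, Finset.univ_inter]
        _ = (J.card : ℝ) ^ (-a) * ∑ j ∈ J, y j * ε j := by
            rw [Finset.mul_sum]
    have h1 : ∑ j ∈ J, y j * ε j ≤ ∑ j ∈ J, y j := by
      apply Finset.sum_le_sum
      intro j _
      rcases hε j with h | h <;> rw [h]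
      · simp
      · rw [mul_neg_one]; linarith [hy0 j]
    have h2 : ∑ j ∈ J, y j ≤ ∑ i ∈ Finset.range J.card, ((i : ℝ) + 1) ^ (a - 1) := by
      have hg : ∀ s t : ℕ, s ≤ t → ((t : ℝ) + 1) ^ (a - 1) ≤ ((s : ℝ) + 1) ^ (a - 1) := by
        intro s t hst
        have hcast : (s : ℝ) + 1 ≤ (t : ℝ) + 1 := by exact_mod_cast Nat.succ_le_succ hst
        exact Real.rpow_le_rpow_of_nonpos (by positivity) hcast (by linarith)
      exact sum_finset_le_sum_range (fun m => ((m : ℝ) + 1) ^ (a - 1)) hg J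
    have h3 := sum_rpow_le a ha ha1 J.card
    have hpa : (1 : ℝ) / a = p := by rw [hadef]; field_simp
    rw [hpa] at h3
    have h4 : ∑ j ∈ J, y j * ε j ≤ p * (J.card : ℝ) ^ a := le_trans h1 (le_trans h2 h3)
    have hpow : (0 : ℝ) < (J.card : ℝ) ^ (-a) := Real.rpow_pos_of_pos hcard _
    have h5 : φ x ≤ (J.card : ℝ) ^ (-a) * (p * (J.card : ℝ) ^ a) := by
      rw [hφx]; exact mul_le_mul_of_nonneg_left h4 hpow.le
    have h6 : (J.card : ℝ) ^ (-a) * (p * (J.card : ℝ) ^ a) = p := by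
      rw [mul_comm p, ← mul_assoc, ← Real.rpow_add hcard]
      simp
    rw [h6] at h5
    exact h5
  -- the test vector z
  set S : ℝ := ∑ i ∈ Finset.range n, ((i : ℝ) + 1)⁻¹ with hSdef
  have hS : 0 < S := by
    apply Finset.sum_pos
    · intro i _; positivity
    · exact Finset.nonempty_range_iff.mpr (by omega)
  have hSfin : ∑ j : Fin n, ((j : ℝ) + 1)⁻¹ = S := by
    rw [hSdef, Finset.sum_range fun i => ((i : ℝ) + 1)⁻¹]
  set z : Fin n → ℝ := fun j => S ^ (-a) * ((j : ℝ) + 1) ^ (-a) with hzdef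
  have hz0 : ∀ j, 0 ≤ z j := fun j =>
    mul_nonneg (Real.rpow_nonneg hS.le _) (Real.rpow_nonneg (by positivity) _)
  have hzpow : ∀ j : Fin n, |z j| ^ p = S⁻¹ * ((j : ℝ) + 1)⁻¹ := by
    intro j
    have hj : (0 : ℝ) < (j : ℝ) + 1 := by positivity
    rw [abs_of_nonneg (hz0 j)]
    show (S ^ (-a) * ((j : ℝ) + 1) ^ (-a)) ^ p = _
    rw [Real.mul_rpow (Real.rpow_nonneg hS.le _) (Real.rpow_nonneg hj.le _),
      ← Real.rpow_mul hS.le, ← Real.rpow_mul hj.le]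
    have hnap : -a * p = -1 := by rw [neg_mul, hap]
    rw [hnap, Real.rpow_neg_one, Real.rpow_neg_one]
  have hnorm : lpNorm (ENNReal.ofReal p) z ≤ 1 := by
    rw [_root_.lpNorm, if_neg ENNReal.ofReal_ne_top, htoReal]
    have hsum1 : ∑ j : Fin n, |z j| ^ p = 1 := by
      calc ∑ j : Fin n, |z j| ^ p = ∑ j : Fin n, S⁻¹ * ((j : ℝ) + 1)⁻¹ :=
            Finset.sum_congr rfl fun j _ => hzpow j
        _ = S⁻¹ * S := by rw [← Finset.mul_sum, hSfin]
        _ = 1 := inv_mul_cancel₀ hS.ne'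
    rw [hsum1, Real.one_rpow]
  -- z lies in C • K
  have hz_mem : z ∈ C • Kset (ENNReal.ofReal p) n := hsub hnorm
  obtain ⟨w, hw, hzw⟩ := Set.mem_smul_set.mp hz_mem
  have hφzC : φ z = C * φ w := by
    rw [← hzw, hlin.map_smul, smul_eq_mul]
  have h7 : φ z ≤ C * p := by
    rw [hφzC]
    exact mul_le_mul_of_nonneg_left (hK w hw) hC.le
  -- the value of φ at z
  have hφz : φ z = S ^ (1 - a) := by
    have hterm : ∀ j : Fin n, y j * z j = S ^ (-a) * ((j : ℝ) + 1)⁻¹ := by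
      intro j
      have hj : (0 : ℝ) < (j : ℝ) + 1 := by positivity
      show ((j : ℝ) + 1) ^ (a - 1) * (S ^ (-a) * ((j : ℝ) + 1) ^ (-a)) = _
      rw [show ((j : ℝ) + 1) ^ (a - 1) * (S ^ (-a) * ((j : ℝ) + 1) ^ (-a)) =
        S ^ (-a) * (((j : ℝ) + 1) ^ (a - 1) * ((j : ℝ) + 1) ^ (-a)) from by ring,
        ← Real.rpow_add hj, show a - 1 + -a = -1 from by ring, Real.rpow_neg_one]
    calc φ z = ∑ j : Fin n, y j * z j := hφapp z
      _ = ∑ j : Fin n, S ^ (-a) * ((j : ℝ) + 1)⁻¹ :=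
          Finset.sum_congr rfl fun j _ => hterm j
      _ = S ^ (-a) * S := by rw [← Finset.mul_sum, hSfin]
      _ = S ^ (1 - a) := by
          rw [Real.rpow_sub hS, Real.rpow_one, Real.rpow_neg hS.le]
          ring
  -- conclude
  have hlogS : Real.log n ≤ S := by rw [hSdef]; exact log_le_sum n hn
  have hlog0 : 0 ≤ Real.log n := Real.log_nonneg (by exact_mod_cast hn)
  have h8 : (Real.log n) ^ (1 - a) ≤ S ^ (1 - a) :=
    Real.rpow_le_rpow hlog0 hlogS (by linarith)
  have h9 : (Real.log n) ^ (1 - a) ≤ C * p := by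
    rw [← hφz] at h8
    linarith
  calc (1 / p) * (Real.log n) ^ (1 - 1 / p)
      = (1 / p) * (Real.log n) ^ (1 - a) := by rw [← hadef]
    _ ≤ (1 / p) * (C * p) := mul_le_mul_of_nonneg_left (by rw [hadef] at h9 ⊢; exact h9) (by positivity)
    _ = C := by field_simp
end

section
/- Let r ∈ (0,2], set 1/s = 1/r − 1/2, let Y be a non-negative random variable with P(Y ≥ t) = e^{−t^s} for all t ≥ 0, and let g ~ N(0,1) be independent of Y. Then for all t ≥ 0, P(|g|·Y ≥ t) ≥ c e^{−4 t^r}, where c = √(2/π) e^{−2}. (For r = 2, interpret Y ≡ 1.) -/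
open MeasureTheory ProbabilityTheory Real
open scoped ENNReal

lemma gauss_real_ineq (u : ℝ) (hu : 0 ≤ u) :
    Real.sqrt (2 / Real.pi) * Real.exp (-2) * Real.exp (-3 * u ^ 2) ≤
      (Real.sqrt (2 * Real.pi))⁻¹ * Real.exp (-(u + 1) ^ 2 / 2) := by
  have hπ : 0 < Real.pi := Real.pi_pos
  have hs : Real.sqrt (2 / Real.pi) * Real.sqrt (2 * Real.pi) = 2 := by
    rw [← Real.sqrt_mul (by positivity)]
    rw [show 2 / Real.pi * (2 * Real.pi) = 4 by field_simp; ring]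
    rw [show (4 : ℝ) = 2 ^ 2 by norm_num, Real.sqrt_sq (by norm_num)]
  have hsp : (0:ℝ) < Real.sqrt (2 * Real.pi) := Real.sqrt_pos.2 (by positivity)
  rw [inv_mul_eq_div, le_div_iff₀ hsp]
  have h2e : (2:ℝ) ≤ Real.exp 1 := by
    have := Real.add_one_le_exp (1:ℝ); linarith
  have key : 2 * (Real.exp (-2) * Real.exp (-3 * u ^ 2)) ≤ Real.exp (-(u + 1) ^ 2 / 2) := by
    calc 2 * (Real.exp (-2) * Real.exp (-3 * u ^ 2))
        ≤ Real.exp 1 * (Real.exp (-2) * Real.exp (-3 * u ^ 2)) := by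
          have : (0:ℝ) < Real.exp (-2) * Real.exp (-3 * u ^ 2) := by positivity
          nlinarith
      _ = Real.exp (1 + (-2 + -3 * u ^ 2)) := by rw [← Real.exp_add, ← Real.exp_add]
      _ ≤ Real.exp (-(u + 1) ^ 2 / 2) := by
          apply Real.exp_le_exp.2
          nlinarith [sq_nonneg (u - 1)]
  calc Real.sqrt (2 / Real.pi) * Real.exp (-2) * Real.exp (-3 * u ^ 2) * Real.sqrt (2 * Real.pi)
      = Real.sqrt (2 / Real.pi) * Real.sqrt (2 * Real.pi) *
          (Real.exp (-2) * Real.exp (-3 * u ^ 2)) := by ring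
    _ = 2 * (Real.exp (-2) * Real.exp (-3 * u ^ 2)) := by rw [hs]
    _ ≤ Real.exp (-(u + 1) ^ 2 / 2) := key

lemma gauss_tail (u : ℝ) (hu : 0 ≤ u) :
    ENNReal.ofReal (Real.sqrt (2 / Real.pi) * Real.exp (-2) * Real.exp (-3 * u ^ 2)) ≤
      gaussianReal 0 1 {x : ℝ | u ≤ |x|} := by
  have hsub : Set.Icc u (u + 1) ⊆ {x : ℝ | u ≤ |x|} := by
    intro x hx
    have : u ≤ x := hx.1
    simp only [Set.mem_setOf_eq]
    rw [abs_of_nonneg (le_trans hu this)]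
    exact this
  refine le_trans ?_ (measure_mono hsub)
  rw [gaussianReal_apply 0 one_ne_zero]
  have hpdf : ∀ x ∈ Set.Icc u (u + 1),
      ENNReal.ofReal ((Real.sqrt (2 * Real.pi))⁻¹ * Real.exp (-(u + 1) ^ 2 / 2)) ≤
        gaussianPDF 0 1 x := by
    intro x hx
    unfold gaussianPDF gaussianPDFReal
    apply ENNReal.ofReal_le_ofReal
    push_cast
    rw [mul_one, mul_one, sub_zero]
    apply mul_le_mul_of_nonneg_left _ (by positivity)
    apply Real.exp_le_exp.2
    have h1 : u ≤ x := hx.1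
    have h2 : x ≤ u + 1 := hx.2
    have h0 : 0 ≤ x := le_trans hu h1
    nlinarith
  calc ENNReal.ofReal (Real.sqrt (2 / Real.pi) * Real.exp (-2) * Real.exp (-3 * u ^ 2))
      ≤ ENNReal.ofReal ((Real.sqrt (2 * Real.pi))⁻¹ * Real.exp (-(u + 1) ^ 2 / 2)) :=
        ENNReal.ofReal_le_ofReal (gauss_real_ineq u hu)
    _ = ENNReal.ofReal ((Real.sqrt (2 * Real.pi))⁻¹ * Real.exp (-(u + 1) ^ 2 / 2)) *
        volume (Set.Icc u (u + 1)) := by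
        rw [Real.volume_Icc]
        simp
    _ = ∫⁻ _ in Set.Icc u (u + 1),
          ENNReal.ofReal ((Real.sqrt (2 * Real.pi))⁻¹ * Real.exp (-(u + 1) ^ 2 / 2)) := by
        rw [setLIntegral_const]
    _ ≤ ∫⁻ x in Set.Icc u (u + 1), gaussianPDF 0 1 x :=
        setLIntegral_mono (measurable_gaussianPDF 0 1) hpdf

/-- Lower tail bound for `|g|·Y`, where `g ~ N(0,1)` is independent of a Weibull
variable `Y` with shape `s` given by `1/s = 1/r - 1/2` (and `Y ≡ 1` when `r = 2`):
`P(|g| Y ≥ t) ≥ c e^{-4 t^r}` with `c = √(2/π) e^{-2}`. -/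
theorem stmt8 {Ω : Type*} [MeasurableSpace Ω] (μ : Measure Ω) [IsProbabilityMeasure μ]
    (r s : ℝ) (hr0 : 0 < r) (hr2 : r ≤ 2)
    (g Y : Ω → ℝ) (hgmeas : Measurable g) (hYmeas : Measurable Y)
    (hY0 : ∀ ω, 0 ≤ Y ω)
    (hg : Measure.map g μ = gaussianReal 0 1)
    (hindep : IndepFun g Y μ)
    (hcase : (r < 2 ∧ 1 / s = 1 / r - 1 / 2 ∧
        ∀ t : ℝ, 0 ≤ t → μ {ω | t ≤ Y ω} = ENNReal.ofReal (Real.exp (-t ^ s)))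
      ∨ (r = 2 ∧ ∀ᵐ ω ∂μ, Y ω = 1)) :
    ∀ t : ℝ, 0 ≤ t →
      ENNReal.ofReal
          (Real.sqrt (2 / Real.pi) * Real.exp (-2) * Real.exp (-4 * t ^ r)) ≤
        μ {ω | t ≤ |g ω| * Y ω} := by
  -- general fact: the tail of |g| under μ
  have habs_meas : ∀ u : ℝ, MeasurableSet {x : ℝ | u ≤ |x|} := by
    intro u
    exact measurableSet_le measurable_const measurable_abs
  have hgauss : ∀ u : ℝ, μ {ω | u ≤ |g ω|} = gaussianReal 0 1 {x : ℝ | u ≤ |x|} := by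
    intro u
    rw [← hg, Measure.map_apply hgmeas (habs_meas u)]
    rfl
  have hc1 : Real.sqrt (2 / Real.pi) * Real.exp (-2) ≤ 1 := by
    have h1 : Real.sqrt (2 / Real.pi) ≤ 1 := by
      rw [show (1:ℝ) = Real.sqrt 1 by simp]
      apply Real.sqrt_le_sqrt
      rw [div_le_one Real.pi_pos]
      linarith [Real.pi_gt_three]
    have h2 : Real.exp (-2) ≤ 1 := Real.exp_le_one_iff.2 (by norm_num)
    nlinarith [Real.sqrt_nonneg (2 / Real.pi), Real.exp_pos (-2:ℝ)]
  intro t ht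
  rcases eq_or_lt_of_le ht with heq | ht0
  · -- t = 0
    have h0 : {ω | t ≤ |g ω| * Y ω} = Set.univ := by
      ext ω
      simp only [Set.mem_setOf_eq, Set.mem_univ, iff_true, ← heq]
      exact mul_nonneg (abs_nonneg _) (hY0 ω)
    rw [h0, measure_univ]
    rw [← heq, Real.zero_rpow hr0.ne', mul_zero, Real.exp_zero, mul_one]
    rw [show (1:ℝ≥0∞) = ENNReal.ofReal 1 by simp]
    exact ENNReal.ofReal_le_ofReal hc1
  rcases hcase with ⟨hr2', hs, hY⟩ | ⟨hr2', hY⟩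
  · -- case r < 2
    set a := t ^ (r / 2) with ha_def
    set b := t ^ (1 - r / 2) with hb_def
    have ha : 0 < a := Real.rpow_pos_of_pos ht0 _
    have hb : 0 < b := Real.rpow_pos_of_pos ht0 _
    have hab : a * b = t := by
      rw [ha_def, hb_def, ← Real.rpow_add ht0]
      norm_num
    have ha2 : a ^ 2 = t ^ r := by
      rw [ha_def, ← Real.rpow_natCast (t ^ (r / 2)) 2, ← Real.rpow_mul ht]
      norm_num
    have hs0 : 0 < s := by
      have : 0 < 1 / s := by
        rw [hs]
        have : 1 / 2 < 1 / r := by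
          apply one_div_lt_one_div_of_lt hr0 hr2'
        linarith
      exact one_div_pos.mp this
    have hbs : b ^ s = t ^ r := by
      rw [hb_def, ← Real.rpow_mul ht]
      congr 1
      have hrne : r ≠ 0 := hr0.ne'
      have hsne : s ≠ 0 := hs0.ne'
      field_simp at hs
      nlinarith [hs]
    have hsubset : {ω | a ≤ |g ω|} ∩ {ω | b ≤ Y ω} ⊆ {ω | t ≤ |g ω| * Y ω} := by
      intro ω ⟨h1, h2⟩
      simp only [Set.mem_setOf_eq] at *
      calc t = a * b := hab.symm
        _ ≤ |g ω| * Y ω := mul_le_mul h1 h2 hb.le (abs_nonneg _)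
    refine le_trans ?_ (measure_mono hsubset)
    have hinter : μ ({ω | a ≤ |g ω|} ∩ {ω | b ≤ Y ω}) =
        μ {ω | a ≤ |g ω|} * μ {ω | b ≤ Y ω} := by
      have := hindep.measure_inter_preimage_eq_mul {x : ℝ | a ≤ |x|} (Set.Ici b)
        (habs_meas a) measurableSet_Ici
      convert this using 2
      all_goals rfl
    rw [hinter, hY b hb.le, hgauss a]
    calc ENNReal.ofReal (Real.sqrt (2 / Real.pi) * Real.exp (-2) * Real.exp (-4 * t ^ r))
        = ENNReal.ofReal (Real.sqrt (2 / Real.pi) * Real.exp (-2) * Real.exp (-3 * a ^ 2))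
            * ENNReal.ofReal (Real.exp (-b ^ s)) := by
          rw [← ENNReal.ofReal_mul (by positivity)]
          congr 1
          rw [ha2, hbs,
            show (-4 * t ^ r : ℝ) = -3 * t ^ r + -t ^ r by ring, Real.exp_add]
          ring
      _ ≤ gaussianReal 0 1 {x : ℝ | a ≤ |x|} * ENNReal.ofReal (Real.exp (-b ^ s)) := by
          apply mul_le_mul_left (gauss_tail a ha.le)
  · -- case r = 2
    have hset : μ {ω | t ≤ |g ω| * Y ω} = μ {ω | t ≤ |g ω|} := by
      apply measure_congr
      filter_upwards [hY] with ω hω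
      change (t ≤ |g ω| * Y ω) = (t ≤ |g ω|)
      rw [hω, mul_one]
    rw [hset, hgauss t]
    refine le_trans ?_ (gauss_tail t ht)
    apply ENNReal.ofReal_le_ofReal
    apply mul_le_mul_of_nonneg_left _ (by positivity)
    apply Real.exp_le_exp.2
    have : t ^ r = t ^ 2 := by
      rw [hr2', show (2:ℝ) = ((2:ℕ):ℝ) by norm_num, Real.rpow_natCast]
    rw [this]
    nlinarith [sq_nonneg t]
end

section
/- Let K, L > 0, r ∈ (0,2], and let Z satisfy P(|Z| ≥ t) ≤ K e^{−t^r/L} for all t ≥ 0. Let Y be non-negative with P(Y ≥ t) = e^{−t^s}, 1/s = 1/r − 1/2, and g ~ N(0,1) independent of Y, and set c = √(2/π) e^{−2}. Then there exist, on a common probability space, random variables U distributed as |Z| and V distributed as |g|Y such that almost surely U ≤ (8L)^{1/r} ((ln(K/c)/4)^{1/r} + V). -/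
open MeasureTheory ProbabilityTheory
open scoped ENNReal

namespace Stmt9Aux

open Set Filter Topology


/-- Generalized inverse of the cdf (quantile function), defined to be `0` outside `(0,1)`. -/
noncomputable def quant (m : Measure ℝ) (p : ℝ) : ℝ :=
  if 0 < p ∧ p < 1 then sInf {x | p ≤ cdf m x} else 0

variable (m : Measure ℝ) [IsProbabilityMeasure m]

lemma quantS_nonempty {p : ℝ} (hp1 : p < 1) : {x | p ≤ cdf m x}.Nonempty := by
  obtain ⟨x, hx⟩ := ((tendsto_cdf_atTop m).eventually (eventually_gt_nhds hp1)).exists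
  exact ⟨x, hx.le⟩

lemma quantS_bddBelow {p : ℝ} (hp0 : 0 < p) : BddBelow {x | p ≤ cdf m x} := by
  obtain ⟨x₀, hx₀⟩ := ((tendsto_cdf_atBot m).eventually (eventually_lt_nhds hp0)).exists
  refine ⟨x₀, fun x hx => ?_⟩
  by_contra h
  push_neg at h
  exact absurd ((monotone_cdf m) h.le) (by simp only [not_le]; exact lt_of_lt_of_le hx₀ hx)

lemma le_cdf_quant {p : ℝ} (hp0 : 0 < p) (hp1 : p < 1) : p ≤ cdf m (quant m p) := by
  rw [quant, if_pos ⟨hp0, hp1⟩]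
  set S := {x | p ≤ cdf m x} with hS
  have hne := quantS_nonempty m hp1
  have hbdd := quantS_bddBelow m hp0
  have key : ∀ y, sInf S < y → p ≤ cdf m y := by
    intro y hy
    obtain ⟨z, hzS, hzy⟩ := (csInf_lt_iff hbdd hne).mp hy
    exact le_trans hzS ((monotone_cdf m) hzy.le)
  have hcont : Filter.Tendsto (cdf m) (𝓝[>] (sInf S)) (𝓝 (cdf m (sInf S))) :=
    ContinuousWithinAt.mono_of_mem_nhdsWithin ((cdf m).right_continuous (sInf S))
      (nhdsWithin_mono _ Ioi_subset_Ici_self (self_mem_nhdsWithin))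
  exact ge_of_tendsto hcont (eventually_mem_nhdsWithin.mono fun y hy => key y hy)

lemma quant_le_iff {p : ℝ} (hp0 : 0 < p) (hp1 : p < 1) {x : ℝ} :
    quant m p ≤ x ↔ p ≤ cdf m x := by
  constructor
  · intro h
    exact le_trans (le_cdf_quant m hp0 hp1) ((monotone_cdf m) h)
  · intro h
    rw [quant, if_pos ⟨hp0, hp1⟩]
    exact csInf_le (quantS_bddBelow m hp0) h

lemma measurable_quant : Measurable (quant m) := by
  apply measurable_of_Iic
  intro x
  by_cases h0x : (0:ℝ) ≤ x
  · have : quant m ⁻¹' Iic x = (Ioo (0:ℝ) 1 ∩ Iic (cdf m x)) ∪ (Ioo (0:ℝ) 1)ᶜ := by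
      ext p
      by_cases hp : 0 < p ∧ p < 1
      · simp only [mem_preimage, mem_Iic, mem_union, mem_inter_iff, mem_Ioo, mem_compl_iff,
          not_and, quant_le_iff m hp.1 hp.2]
        constructor
        · intro h; exact Or.inl ⟨⟨hp.1, hp.2⟩, h⟩
        · rintro (⟨_, h⟩ | h)
          · exact h
          · exact absurd hp (by simpa [mem_Ioo] using h)
      · simp only [mem_preimage, mem_Iic, quant, if_neg hp, mem_union, mem_inter_iff, mem_Ioo,
          mem_compl_iff]
        constructor
        · intro _; exact Or.inr (by simpa [mem_Ioo] using hp)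
        · intro _; exact h0x
    rw [this]
    exact ((measurableSet_Ioo.inter measurableSet_Iic).union measurableSet_Ioo.compl)
  · have : quant m ⁻¹' Iic x = Ioo (0:ℝ) 1 ∩ Iic (cdf m x) := by
      ext p
      by_cases hp : 0 < p ∧ p < 1
      · simp only [mem_preimage, mem_Iic, mem_inter_iff, mem_Ioo, quant_le_iff m hp.1 hp.2]
        exact ⟨fun h => ⟨⟨hp.1, hp.2⟩, h⟩, fun h => h.2⟩
      · simp only [mem_preimage, mem_Iic, quant, if_neg hp, mem_inter_iff, mem_Ioo]
        constructor
        · intro h; exact absurd h h0x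
        · rintro ⟨h, -⟩; exact absurd hp (by simpa using h)
    rw [this]
    exact measurableSet_Ioo.inter measurableSet_Iic

lemma map_quant : Measure.map (quant m) (volume.restrict (Ioo (0:ℝ) 1)) = m := by
  haveI hprob : IsProbabilityMeasure (volume.restrict (Ioo (0:ℝ) 1)) :=
    ⟨by simp [Real.volume_Ioo]⟩
  haveI : IsProbabilityMeasure (Measure.map (quant m) (volume.restrict (Ioo (0:ℝ) 1))) :=
    Measure.isProbabilityMeasure_map (measurable_quant m).aemeasurable
  refine Measure.ext_of_Iic _ m (fun x => ?_)
  rw [Measure.map_apply (measurable_quant m) measurableSet_Iic,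
    Measure.restrict_apply (measurable_quant m measurableSet_Iic)]
  have hset : quant m ⁻¹' Iic x ∩ Ioo 0 1 = Iic (cdf m x) ∩ Ioo 0 1 := by
    ext p
    simp only [mem_inter_iff, mem_preimage, mem_Iic, mem_Ioo, and_congr_left_iff]
    rintro ⟨hp0, hp1⟩
    exact quant_le_iff m hp0 hp1
  rw [hset, ← ofReal_cdf m x]
  have hc0 : 0 ≤ cdf m x := cdf_nonneg m x
  have hc1 : cdf m x ≤ 1 := cdf_le_one m x
  apply le_antisymm
  · calc volume (Iic (cdf m x) ∩ Ioo 0 1) ≤ volume (Ioc (0:ℝ) (cdf m x)) := by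
          apply measure_mono
          rintro p ⟨hp, hp0, hp1⟩
          exact ⟨hp0, hp⟩
      _ = ENNReal.ofReal (cdf m x) := by simp [Real.volume_Ioc]
  · calc ENNReal.ofReal (cdf m x) = volume (Ioo (0:ℝ) (cdf m x)) := by simp [Real.volume_Ioo]
      _ ≤ volume (Iic (cdf m x) ∩ Ioo 0 1) := by
          apply measure_mono
          rintro p ⟨hp0, hp⟩
          exact ⟨hp.le, hp0, lt_of_lt_of_le hp hc1⟩



lemma gauss_tail {u : ℝ} (hu : 0 ≤ u) :
    ENNReal.ofReal (Real.sqrt (2 / Real.pi) * Real.exp (-2) * Real.exp (-(u ^ 2)))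
      ≤ gaussianReal 0 1 (Ioi u) := by
  have h1 : (1 : NNReal) ≠ 0 := one_ne_zero
  rw [gaussianReal_apply 0 h1]
  have hsqrt : Real.sqrt (2 / Real.pi) = 2 / Real.sqrt (2 * Real.pi) := by
    rw [eq_div_iff (by positivity : Real.sqrt (2 * Real.pi) ≠ 0), ← Real.sqrt_mul (by positivity)]
    rw [show 2 / Real.pi * (2 * Real.pi) = 2 ^ 2 by field_simp]
    exact Real.sqrt_sq (by norm_num)
  have hpdf : ∀ x ∈ Ioc u (u + 1),
      ENNReal.ofReal (Real.sqrt (2 / Real.pi) * Real.exp (-2) * Real.exp (-(u ^ 2)))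
        ≤ gaussianPDF 0 1 x := by
    intro x hx
    rw [gaussianPDF]
    apply ENNReal.ofReal_le_ofReal
    rw [gaussianPDFReal]
    simp only [NNReal.coe_one, mul_one, sub_zero]
    have hx0 : 0 ≤ x := le_trans hu hx.1.le
    have hx2 : x ^ 2 ≤ (u + 1) ^ 2 := by nlinarith [hx.1.le, hx.2]
    have hlog2 : Real.log 2 ≤ 1 := by
      have := Real.log_le_sub_one_of_pos (by norm_num : (0:ℝ) < 2); linarith
    calc Real.sqrt (2 / Real.pi) * Real.exp (-2) * Real.exp (-(u ^ 2))
        = (Real.sqrt (2 * Real.pi))⁻¹ * (2 * (Real.exp (-2) * Real.exp (-(u ^ 2)))) := by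
          rw [hsqrt]; field_simp
      _ = (Real.sqrt (2 * Real.pi))⁻¹ * Real.exp (Real.log 2 + -2 + -(u ^ 2)) := by
          rw [Real.exp_add, Real.exp_add, Real.exp_log (by norm_num : (0:ℝ) < 2)]; ring
      _ ≤ (Real.sqrt (2 * Real.pi))⁻¹ * Real.exp (-(u + 1) ^ 2 / 2) := by
          have h2 : Real.log 2 + -2 + -(u ^ 2) ≤ -(u + 1) ^ 2 / 2 := by
            nlinarith [sq_nonneg (u - 1), hlog2]
          exact mul_le_mul_of_nonneg_left (Real.exp_le_exp.mpr h2) (by positivity)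
      _ ≤ (Real.sqrt (2 * Real.pi))⁻¹ * Real.exp (-x ^ 2 / 2) := by
          refine mul_le_mul_of_nonneg_left (Real.exp_le_exp.mpr ?_) (by positivity)
          linarith
  calc ENNReal.ofReal (Real.sqrt (2 / Real.pi) * Real.exp (-2) * Real.exp (-(u ^ 2)))
      = ∫⁻ _ in Ioc u (u + 1),
          ENNReal.ofReal (Real.sqrt (2 / Real.pi) * Real.exp (-2) * Real.exp (-(u ^ 2))) := by
        rw [setLIntegral_const, Real.volume_Ioc]
        norm_num
    _ ≤ ∫⁻ x in Ioc u (u + 1), gaussianPDF 0 1 x :=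
        setLIntegral_mono (measurable_gaussianPDF 0 1) hpdf
    _ ≤ ∫⁻ x in Ioi u, gaussianPDF 0 1 x :=
        lintegral_mono_set Ioc_subset_Ioi_self




lemma nu_tail {Ω₂ : Type*} [MeasurableSpace Ω₂] (ν : Measure Ω₂) [IsProbabilityMeasure ν]
    (g Y : Ω₂ → ℝ) (hgmeas : Measurable g) (hYmeas : Measurable Y) (hY0 : ∀ ω, 0 ≤ Y ω)
    (hg : Measure.map g ν = gaussianReal 0 1) (hindep : IndepFun g Y ν)
    (r s : ℝ) (hr0 : 0 < r)
    (hcase : (r < 2 ∧ 1 / s = 1 / r - 1 / 2 ∧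
        ∀ t : ℝ, 0 ≤ t → ν {ω | t ≤ Y ω} = ENNReal.ofReal (Real.exp (-t ^ s)))
      ∨ (r = 2 ∧ ∀ᵐ ω ∂ν, Y ω = 1))
    {t : ℝ} (ht : 0 ≤ t) :
    ENNReal.ofReal (Real.sqrt (2 / Real.pi) * Real.exp (-2) * Real.exp (-(4 * t ^ r)))
      ≤ ν {ω | t < |g ω| * Y ω} := by
  rcases hcase with ⟨hrlt, hs_eq, hYtail⟩ | ⟨hreq, hY1⟩
  · -- case r < 2 : use a slice argument
    have h2r : (0:ℝ) < 2 - r := by linarith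
    have hsval : s = 2 * r / (2 - r) := by
      have h2 : (1:ℝ) / s = (2 - r) / (2 * r) := by
        rw [hs_eq, div_sub_div _ _ hr0.ne' (two_ne_zero)]
        congr 1 <;> ring
      have hpos : (0:ℝ) < (2 - r) / (2 * r) := by positivity
      have hs_ne : s ≠ 0 := by
        intro h0
        rw [h0, div_zero] at h2
        linarith
      rw [div_eq_div_iff hs_ne (by positivity : (2:ℝ) * r ≠ 0)] at h2
      rw [eq_div_iff h2r.ne']
      linarith
    have hslice : ∀ y : ℝ, 0 < y → ∀ A : Set ℝ, MeasurableSet A → (∀ x ∈ A, t / y < |x|) →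
        gaussianReal 0 1 A * ENNReal.ofReal (Real.exp (-y ^ s)) ≤ ν {ω | t < |g ω| * Y ω} := by
      intro y hy A hA hAsub
      have h1 : g ⁻¹' A ∩ Y ⁻¹' Ici y ⊆ {ω | t < |g ω| * Y ω} := by
        rintro ω ⟨hgA, hYy⟩
        have h2 : t / y < |g ω| := hAsub _ hgA
        have h3 : t < |g ω| * y := (div_lt_iff₀ hy).mp h2
        calc t < |g ω| * y := h3
          _ ≤ |g ω| * Y ω := mul_le_mul_of_nonneg_left hYy (abs_nonneg _)
      calc gaussianReal 0 1 A * ENNReal.ofReal (Real.exp (-y ^ s))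
          = ν (g ⁻¹' A) * ν (Y ⁻¹' Ici y) := by
            rw [← hg, Measure.map_apply hgmeas hA]
            congr 1
            exact (hYtail y hy.le).symm
        _ = ν (g ⁻¹' A ∩ Y ⁻¹' Ici y) :=
            (hindep.measure_inter_preimage_eq_mul A (Ici y) hA measurableSet_Ici).symm
        _ ≤ ν {ω | t < |g ω| * Y ω} := measure_mono h1
    rcases eq_or_lt_of_le ht with hteq | htpos
    · -- t = 0
      have hA : gaussianReal 0 1 {x : ℝ | 0 < |x|} = 1 := by
        have h0 : gaussianReal 0 1 {(0:ℝ)} = 0 :=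
          gaussianReal_absolutelyContinuous 0 one_ne_zero Real.volume_singleton
        have hAeq : {x : ℝ | 0 < |x|} = {(0:ℝ)}ᶜ := by
          ext x; simp [abs_pos]
        rw [hAeq, measure_compl (measurableSet_singleton 0) (measure_ne_top _ _), h0]
        simp
      have hmeasA : MeasurableSet {x : ℝ | 0 < |x|} :=
        measurableSet_lt measurable_const measurable_abs
      have hsub : ∀ x ∈ {x : ℝ | 0 < |x|}, t / 1 < |x| := by
        intro x hx
        simpa [← hteq] using hx
      have := hslice 1 one_pos _ hmeasA hsub
      rw [hA, one_mul, Real.one_rpow] at this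
      refine le_trans (ENNReal.ofReal_le_ofReal ?_) this
      rw [← hteq]
      have h0r : (0:ℝ) ^ r = 0 := Real.zero_rpow hr0.ne'
      rw [h0r]
      have hsqrt1 : Real.sqrt (2 / Real.pi) ≤ 1 := by
        rw [show (1:ℝ) = Real.sqrt 1 by simp]
        apply Real.sqrt_le_sqrt
        rw [div_le_one Real.pi_pos]
        linarith [Real.pi_gt_three]
      have he : Real.exp (-2) ≤ Real.exp (-1) := Real.exp_le_exp.mpr (by norm_num)
      have hep : (0:ℝ) < Real.exp (-2) := Real.exp_pos _
      calc Real.sqrt (2 / Real.pi) * Real.exp (-2) * Real.exp (-(4 * 0))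
          = Real.sqrt (2 / Real.pi) * Real.exp (-2) := by norm_num
        _ ≤ 1 * Real.exp (-1) := by
            apply mul_le_mul hsqrt1 he hep.le zero_le_one
        _ = Real.exp (-1) := one_mul _
    · -- t > 0
      set y := t ^ ((2 - r) / 2) with hy_def
      have hy : 0 < y := Real.rpow_pos_of_pos htpos _
      have hty : t / y = t ^ (r / 2) := by
        rw [show r / 2 = 1 - (2 - r) / 2 by ring, Real.rpow_sub htpos, Real.rpow_one]
      have hys : y ^ s = t ^ r := by
        rw [hy_def, ← Real.rpow_mul ht]
        congr 1
        rw [hsval]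
        field_simp
      have hu2 : (t ^ (r / 2)) ^ (2:ℕ) = t ^ r := by
        rw [sq, ← Real.rpow_add htpos]
        norm_num
      have hg1 := gauss_tail (u := t / y) (by positivity)
      rw [hty, hu2] at hg1
      have := hslice y hy (Ioi (t / y)) measurableSet_Ioi
        (fun x hx => lt_of_lt_of_le hx (le_abs_self x))
      refine le_trans ?_ this
      rw [hys]
      calc ENNReal.ofReal (Real.sqrt (2 / Real.pi) * Real.exp (-2) * Real.exp (-(4 * t ^ r)))
          ≤ ENNReal.ofReal ((Real.sqrt (2 / Real.pi) * Real.exp (-2) * Real.exp (-(t ^ r)))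
              * Real.exp (-t ^ r)) := by
            apply ENNReal.ofReal_le_ofReal
            have htr : 0 ≤ t ^ r := Real.rpow_nonneg ht r
            have hexp : Real.exp (-(4 * t ^ r)) ≤ Real.exp (-(t ^ r)) * Real.exp (-t ^ r) := by
              rw [← Real.exp_add]
              exact Real.exp_le_exp.mpr (by linarith)
            calc Real.sqrt (2 / Real.pi) * Real.exp (-2) * Real.exp (-(4 * t ^ r))
                ≤ Real.sqrt (2 / Real.pi) * Real.exp (-2)
                    * (Real.exp (-(t ^ r)) * Real.exp (-t ^ r)) :=
                  mul_le_mul_of_nonneg_left hexp (by positivity)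
              _ = Real.sqrt (2 / Real.pi) * Real.exp (-2) * Real.exp (-(t ^ r))
                    * Real.exp (-t ^ r) := by ring
        _ = ENNReal.ofReal (Real.sqrt (2 / Real.pi) * Real.exp (-2) * Real.exp (-(t ^ r)))
              * ENNReal.ofReal (Real.exp (-t ^ r)) := by
            rw [ENNReal.ofReal_mul (by positivity)]
        _ ≤ gaussianReal 0 1 (Ioi (t / y)) * ENNReal.ofReal (Real.exp (-t ^ r)) := by
            gcongr
            rw [hty]
            exact hg1
  · -- case r = 2
    subst hreq
    have hsets : {ω | t < |g ω| * Y ω} =ᵐ[ν] {ω | t < |g ω|} := by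
      rw [eventuallyEq_set]
      filter_upwards [hY1] with ω hω
      simp [hω]
    rw [measure_congr hsets]
    have hmeasA : MeasurableSet {x : ℝ | t < |x|} :=
      measurableSet_lt measurable_const measurable_abs
    have hpre : {ω | t < |g ω|} = g ⁻¹' {x : ℝ | t < |x|} := rfl
    rw [hpre, ← Measure.map_apply hgmeas hmeasA, hg]
    have h1 : gaussianReal 0 1 (Ioi t) ≤ gaussianReal 0 1 {x : ℝ | t < |x|} := by
      apply measure_mono
      intro x hx
      exact lt_of_lt_of_le hx (le_abs_self x)
    refine le_trans ?_ (le_trans (gauss_tail ht) h1)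
    apply ENNReal.ofReal_le_ofReal
    apply mul_le_mul_of_nonneg_left _ (by positivity)
    apply Real.exp_le_exp.mpr
    have h2 : t ^ (2:ℝ) = t ^ (2:ℕ) := by
      rw [← Real.rpow_natCast t 2]
      norm_num
    rw [h2]
    nlinarith [sq_nonneg t]


end Stmt9Aux

open Stmt9Aux Set

/-- Coupling lemma: if `P(|Z| ≥ t) ≤ K e^{-t^r/L}` and `|g| Y` is as in the previous
lemma (`g ~ N(0,1)` independent of a Weibull variable `Y` of shape `s`,
`1/s = 1/r - 1/2`, with `Y ≡ 1` when `r = 2`), then on a common probability space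
there are `U ~ |Z|` and `V ~ |g| Y` with
`U ≤ (8L)^{1/r} ((ln(K/c)/4)^{1/r} + V)` a.s., where `c = √(2/π) e^{-2}`. -/

theorem stmt9 (K L r : ℝ) (hK : 0 < K) (hL : 0 < L) (hr0 : 0 < r) (hr2 : r ≤ 2)
    {Ω₁ : Type*} [MeasurableSpace Ω₁] (μ : Measure Ω₁) [IsProbabilityMeasure μ]
    (Z : Ω₁ → ℝ) (hZmeas : Measurable Z)
    (hZtail : ∀ t : ℝ, 0 ≤ t →
      μ {ω | t ≤ |Z ω|} ≤ ENNReal.ofReal (K * Real.exp (-t ^ r / L)))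
    {Ω₂ : Type*} [MeasurableSpace Ω₂] (ν : Measure Ω₂) [IsProbabilityMeasure ν]
    (g Y : Ω₂ → ℝ) (hgmeas : Measurable g) (hYmeas : Measurable Y)
    (hY0 : ∀ ω, 0 ≤ Y ω)
    (hg : Measure.map g ν = gaussianReal 0 1)
    (hindep : IndepFun g Y ν)
    (s : ℝ)
    (hcase : (r < 2 ∧ 1 / s = 1 / r - 1 / 2 ∧
        ∀ t : ℝ, 0 ≤ t → ν {ω | t ≤ Y ω} = ENNReal.ofReal (Real.exp (-t ^ s)))
      ∨ (r = 2 ∧ ∀ᵐ ω ∂ν, Y ω = 1)) :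
    ∃ (Ω : Type) (_ : MeasurableSpace Ω) (P : Measure Ω) (_ : IsProbabilityMeasure P)
      (U V : Ω → ℝ), Measurable U ∧ Measurable V ∧
      Measure.map U P = Measure.map (fun ω => |Z ω|) μ ∧
      Measure.map V P = Measure.map (fun ω => |g ω| * Y ω) ν ∧
      ∀ᵐ ω ∂P, U ω ≤ (8 * L) ^ (1 / r) *
        ((Real.log (K / (Real.sqrt (2 / Real.pi) * Real.exp (-2))) / 4) ^ (1 / r)
          + V ω) := by
  classical
  set c := Real.sqrt (2 / Real.pi) * Real.exp (-2) with hc_def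
  have hc_pos : 0 < c := by rw [hc_def]; positivity
  have hK1 : 1 ≤ K := by
    have h0 := hZtail 0 le_rfl
    have huniv : {ω | (0:ℝ) ≤ |Z ω|} = Set.univ := by
      ext ω; simp [abs_nonneg]
    rw [huniv, measure_univ, Real.zero_rpow hr0.ne', neg_zero, zero_div, Real.exp_zero,
      mul_one] at h0
    exact ENNReal.one_le_ofReal.mp h0
  have hc_le1 : c ≤ 1 := by
    rw [hc_def]
    have hsqrt1 : Real.sqrt (2 / Real.pi) ≤ 1 := by
      rw [show (1:ℝ) = Real.sqrt 1 by simp]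
      apply Real.sqrt_le_sqrt
      rw [div_le_one Real.pi_pos]
      linarith [Real.pi_gt_three]
    have he1 : Real.exp (-2) ≤ 1 := Real.exp_le_one_iff.mpr (by norm_num)
    nlinarith [Real.exp_pos (-2)]
  have hlogKc : 0 ≤ Real.log (K / c) := Real.log_nonneg (by rw [le_div_iff₀ hc_pos]; nlinarith)
  set b := (Real.log (K / c) / 4) ^ (1 / r) with hb_def
  set a := (8 * L) ^ (1 / r) with ha_def
  have ha_pos : 0 < a := Real.rpow_pos_of_pos (by linarith) _
  have hb0 : 0 ≤ b := Real.rpow_nonneg (by positivity) _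
  have har : a ^ r = 8 * L := by
    rw [ha_def, ← Real.rpow_mul (by linarith), one_div_mul_cancel hr0.ne', Real.rpow_one]
  have hbr : b ^ r = Real.log (K / c) / 4 := by
    rw [hb_def, ← Real.rpow_mul (by positivity), one_div_mul_cancel hr0.ne', Real.rpow_one]
  set μ₁ := Measure.map (fun ω => |Z ω|) μ with hμ₁
  set ν₁ := Measure.map (fun ω => |g ω| * Y ω) ν with hν₁
  have hZa : Measurable fun ω => |Z ω| := hZmeas.abs
  have hgYa : Measurable fun ω => |g ω| * Y ω := hgmeas.abs.mul hYmeas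
  haveI : IsProbabilityMeasure μ₁ := Measure.isProbabilityMeasure_map hZa.aemeasurable
  haveI : IsProbabilityMeasure ν₁ := Measure.isProbabilityMeasure_map hgYa.aemeasurable
  have hcdf_neg : ∀ x : ℝ, x < 0 → cdf ν₁ x = 0 := by
    intro x hx
    rw [cdf_eq_real, measureReal_def]
    have hemp : (fun ω => |g ω| * Y ω) ⁻¹' Set.Iic x = ∅ := by
      ext ω
      simp only [Set.mem_preimage, Set.mem_Iic, Set.mem_empty_iff_false, iff_false, not_le]
      calc x < 0 := hx
        _ ≤ |g ω| * Y ω := mul_nonneg (abs_nonneg _) (hY0 ω)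
    rw [hν₁, Measure.map_apply hgYa measurableSet_Iic, hemp, measure_empty]
    simp
  have hcdf : ∀ t : ℝ, 0 ≤ t → cdf ν₁ t ≤ cdf μ₁ (a * (b + t)) := by
    intro t ht
    have habt : 0 ≤ a * (b + t) := by positivity
    have key : μ₁ (Set.Ioi (a * (b + t))) ≤ ν₁ (Set.Ioi t) := by
      have h1 : μ₁ (Set.Ioi (a * (b + t)))
          ≤ ENNReal.ofReal (K * Real.exp (-(a * (b + t)) ^ r / L)) := by
        rw [hμ₁, Measure.map_apply hZa measurableSet_Ioi]
        refine le_trans ?_ (hZtail (a * (b + t)) habt)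
        apply measure_mono
        intro ω hω
        exact le_of_lt (Set.mem_Ioi.mp (Set.mem_preimage.mp hω))
      have h2 : K * Real.exp (-(a * (b + t)) ^ r / L) ≤ c * Real.exp (-(4 * t ^ r)) := by
        have hab : (a * (b + t)) ^ r = (8 * L) * (b + t) ^ r := by
          rw [Real.mul_rpow ha_pos.le (by positivity), har]
        have hbt1 : b ^ r ≤ (b + t) ^ r := Real.rpow_le_rpow hb0 (by linarith) hr0.le
        have hbt2 : t ^ r ≤ (b + t) ^ r := Real.rpow_le_rpow ht (by linarith) hr0.le
        have hdiv : Real.log (K / c) + 4 * t ^ r ≤ (a * (b + t)) ^ r / L := by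
          rw [hab, le_div_iff₀ hL]
          nlinarith [mul_le_mul_of_nonneg_left hbt1 hL.le,
            mul_le_mul_of_nonneg_left hbt2 hL.le, hbr]
        calc K * Real.exp (-(a * (b + t)) ^ r / L)
            ≤ K * Real.exp (-(Real.log (K / c) + 4 * t ^ r)) := by
              rw [neg_div]
              exact mul_le_mul_of_nonneg_left
                (Real.exp_le_exp.mpr (neg_le_neg hdiv)) hK.le
          _ = c * Real.exp (-(4 * t ^ r)) := by
              rw [neg_add, Real.exp_add, Real.exp_neg, Real.exp_log (by positivity),
                ← mul_assoc]
              congr 1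
              rw [inv_div, mul_comm, div_mul_cancel₀ _ (ne_of_gt hK)]
      have h3 : ENNReal.ofReal (c * Real.exp (-(4 * t ^ r))) ≤ ν₁ (Set.Ioi t) := by
        rw [hν₁, Measure.map_apply hgYa measurableSet_Ioi]
        have hnt := nu_tail ν g Y hgmeas hYmeas hY0 hg hindep r s hr0 hcase ht
        have hpre : (fun ω => |g ω| * Y ω) ⁻¹' Set.Ioi t = {ω | t < |g ω| * Y ω} := rfl
        rw [hpre, hc_def]
        exact hnt
      calc μ₁ (Set.Ioi (a * (b + t))) ≤ _ := h1
        _ ≤ ENNReal.ofReal (c * Real.exp (-(4 * t ^ r))) := ENNReal.ofReal_le_ofReal h2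
        _ ≤ ν₁ (Set.Ioi t) := h3
    have e1 : ν₁ (Set.Iic t) = 1 - ν₁ (Set.Ioi t) := by
      rw [← Set.compl_Ioi, measure_compl measurableSet_Ioi (measure_ne_top _ _), measure_univ]
    have e2 : μ₁ (Set.Iic (a * (b + t))) = 1 - μ₁ (Set.Ioi (a * (b + t))) := by
      rw [← Set.compl_Ioi, measure_compl measurableSet_Ioi (measure_ne_top _ _), measure_univ]
    rw [cdf_eq_real, cdf_eq_real, measureReal_def, measureReal_def, e1, e2]
    apply ENNReal.toReal_mono
    · exact (lt_of_le_of_lt tsub_le_self ENNReal.one_lt_top).ne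
    · exact tsub_le_tsub_left key 1
  refine ⟨ℝ, inferInstance, volume.restrict (Set.Ioo 0 1),
    ⟨by rw [Measure.restrict_apply_univ, Real.volume_Ioo]; norm_num⟩,
    quant μ₁, quant ν₁, measurable_quant μ₁, measurable_quant ν₁,
    map_quant μ₁, map_quant ν₁, ?_⟩
  filter_upwards [ae_restrict_mem measurableSet_Ioo] with p hp
  obtain ⟨hp0, hp1⟩ := hp
  have hVmem : p ≤ cdf ν₁ (quant ν₁ p) := le_cdf_quant ν₁ hp0 hp1
  have ht0 : 0 ≤ quant ν₁ p := by
    by_contra h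
    push_neg at h
    rw [hcdf_neg _ h] at hVmem
    linarith
  have h2 : p ≤ cdf μ₁ (a * (b + quant ν₁ p)) := le_trans hVmem (hcdf _ ht0)
  exact (quant_le_iff μ₁ hp0 hp1).mpr h2
end

section
/- Let X be an m×n random matrix with independent mean-zero ±1-valued (or more generally [−1,1]-valued) entries, and let (b_j)_{j≤n} be reals. Suppose t₀ satisfies |∑_{j≤n} b_j X_{ij}| ≤ t₀ almost surely. Then for all q ≥ 2 and 0 ≤ t ≤ t₀^{2−q}/(4 ∑_j b_j²), E exp(t |∑_j b_j X_{ij}|^q) ≤ 1 + C(q)^q t (∑_j b_j²)^{q/2}, where C(q) = 2(q Γ(q/2))^{1/q}. -/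
open MeasureTheory ProbabilityTheory Real Set
open scoped ENNReal

/-- pointwise convexity bound -/
lemma bgn_pointwise {x a : ℝ} (hx : |x| ≤ 1) :
    Real.exp (a * x) ≤ Real.cosh a + x * Real.sinh a := by
  rw [abs_le] at hx
  have h := convexOn_exp.2 (Set.mem_univ a) (Set.mem_univ (-a))
    (by linarith : (0:ℝ) ≤ (1 + x) / 2) (by linarith : (0:ℝ) ≤ (1 - x) / 2)
    (by ring : (1 + x) / 2 + (1 - x) / 2 = 1)
  simp only [smul_eq_mul] at h
  have harg : (1 + x) / 2 * a + (1 - x) / 2 * (-a) = a * x := by ring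
  rw [harg] at h
  calc Real.exp (a * x) ≤ (1 + x) / 2 * Real.exp a + (1 - x) / 2 * Real.exp (-a) := h
    _ = Real.cosh a + x * Real.sinh a := by rw [Real.cosh_eq, Real.sinh_eq]; ring

/-- Hoeffding's lemma for `[-1,1]`-valued mean-zero variables. -/
lemma bgn_hoeffding {Ω : Type*} [MeasurableSpace Ω] (μ : Measure Ω) [IsProbabilityMeasure μ]
    (Y : Ω → ℝ) (hY : Measurable Y) (hint : Integrable Y μ)
    (hmean : ∫ ω, Y ω ∂μ = 0) (hbdd : ∀ᵐ ω ∂μ, |Y ω| ≤ 1) (a : ℝ) :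
    mgf Y μ a ≤ Real.exp (a ^ 2 / 2) := by
  have hint1 : Integrable (fun ω => Real.exp (a * Y ω)) μ := by
    refine Integrable.mono' (integrable_const (Real.exp |a|))
      ((hY.const_mul a).exp.aestronglyMeasurable) ?_
    filter_upwards [hbdd] with ω hω
    rw [Real.norm_eq_abs, abs_of_pos (Real.exp_pos _)]
    refine Real.exp_le_exp.2 ?_
    calc a * Y ω ≤ |a * Y ω| := le_abs_self _
      _ = |a| * |Y ω| := abs_mul _ _
      _ ≤ |a| * 1 := by gcongr
      _ = |a| := mul_one _
  have hint2 : Integrable (fun ω => Real.cosh a + Y ω * Real.sinh a) μ :=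
    (integrable_const _).add (hint.mul_const _)
  have key : mgf Y μ a ≤ ∫ ω, (Real.cosh a + Y ω * Real.sinh a) ∂μ := by
    refine integral_mono_ae hint1 hint2 ?_
    filter_upwards [hbdd] with ω hω using bgn_pointwise hω
  rw [integral_add (integrable_const _) (hint.mul_const _), integral_const,
    integral_mul_const, hmean, probReal_univ] at key
  simp only [ENNReal.toReal_one, smul_eq_mul, one_mul, zero_mul, add_zero] at key
  exact key.trans (Real.cosh_le_exp_half_sq a)


/-- mgf bound for the weighted sum -/
lemma bgn_mgf_sum {Ω : Type*} [MeasurableSpace Ω] (μ : Measure Ω) [IsProbabilityMeasure μ]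
    {n : ℕ} (X : Fin n → Ω → ℝ)
    (hmeas : ∀ j, Measurable (X j))
    (hindep : iIndepFun X μ)
    (hint : ∀ j, Integrable (X j) μ)
    (hmean : ∀ j, ∫ ω, X j ω ∂μ = 0)
    (hbdd : ∀ j, ∀ᵐ ω ∂μ, |X j ω| ≤ 1)
    (b : Fin n → ℝ) (a : ℝ) :
    mgf (fun ω => ∑ j, b j * X j ω) μ a ≤ Real.exp (a ^ 2 * (∑ j, b j ^ 2) / 2) := by
  set Y : Fin n → Ω → ℝ := fun j ω => b j * X j ω with hY
  have hYmeas : ∀ j, Measurable (Y j) := fun j => (hmeas j).const_mul (b j)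
  have hYindep : iIndepFun Y μ :=
    hindep.comp (fun j x => b j * x) (fun j => measurable_const_mul (b j))
  have hsum : (fun ω => ∑ j, b j * X j ω) = ∑ j, Y j := by
    funext ω; simp [hY]
  rw [hsum, hYindep.mgf_sum hYmeas Finset.univ]
  calc ∏ j, mgf (Y j) μ a ≤ ∏ j, Real.exp ((a * b j) ^ 2 / 2) := by
        refine Finset.prod_le_prod (fun j _ => mgf_nonneg) (fun j _ => ?_)
        have : mgf (Y j) μ a = mgf (X j) μ (a * b j) := by
          simp only [mgf, hY, ← mul_assoc]
        rw [this]
        exact bgn_hoeffding μ (X j) (hmeas j) (hint j) (hmean j) (hbdd j) _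
    _ = Real.exp (a ^ 2 * (∑ j, b j ^ 2) / 2) := by
        rw [← Real.exp_sum]
        congr 1
        rw [Finset.mul_sum, ← Finset.sum_div]
        congr 1
        exact Finset.sum_congr rfl fun j _ => by ring

/-- Hoeffding tail bound -/
lemma bgn_tail {Ω : Type*} [MeasurableSpace Ω] (μ : Measure Ω) [IsProbabilityMeasure μ]
    {n : ℕ} (X : Fin n → Ω → ℝ)
    (hmeas : ∀ j, Measurable (X j))
    (hindep : iIndepFun X μ)
    (hint : ∀ j, Integrable (X j) μ)
    (hmean : ∀ j, ∫ ω, X j ω ∂μ = 0)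
    (hbdd : ∀ j, ∀ᵐ ω ∂μ, |X j ω| ≤ 1)
    (b : Fin n → ℝ) (hσ2 : 0 < ∑ j, b j ^ 2) (s : ℝ) (hs : 0 < s) :
    μ {ω | s ≤ |∑ j, b j * X j ω|} ≤
      ENNReal.ofReal (2 * Real.exp (-(s ^ 2) / (2 * ∑ j, b j ^ 2))) := by
  set σ2 : ℝ := ∑ j, b j ^ 2 with hσ2def
  set S : Ω → ℝ := fun ω => ∑ j, b j * X j ω with hSdef
  have hS_meas : Measurable S := Finset.measurable_sum _ (fun j _ => (hmeas j).const_mul (b j))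
  have hmgf : ∀ a : ℝ, mgf S μ a ≤ Real.exp (a ^ 2 * σ2 / 2) := fun a =>
    bgn_mgf_sum μ X hmeas hindep hint hmean hbdd b a
  have hSbdd : ∀ᵐ ω ∂μ, |S ω| ≤ ∑ j, |b j| := by
    filter_upwards [ae_all_iff.2 hbdd] with ω hω
    calc |S ω| ≤ ∑ j, |b j * X j ω| := Finset.abs_sum_le_sum_abs _ _
      _ ≤ ∑ j, |b j| := Finset.sum_le_sum fun j _ => by
          rw [abs_mul]
          calc |b j| * |X j ω| ≤ |b j| * 1 := by gcongr; exact hω j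
            _ = |b j| := mul_one _
  have hSint : ∀ a : ℝ, Integrable (fun ω => Real.exp (a * S ω)) μ := by
    intro a
    refine Integrable.mono' (integrable_const (Real.exp (|a| * ∑ j, |b j|)))
      ((hS_meas.const_mul a).exp.aestronglyMeasurable) ?_
    filter_upwards [hSbdd] with ω hω
    rw [Real.norm_eq_abs, abs_of_pos (Real.exp_pos _)]
    refine Real.exp_le_exp.2 ?_
    calc a * S ω ≤ |a * S ω| := le_abs_self _
      _ = |a| * |S ω| := abs_mul _ _
      _ ≤ |a| * ∑ j, |b j| := by
          refine mul_le_mul_of_nonneg_left hω (abs_nonneg a)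
  -- Chernoff bounds
  have hbd : Real.exp (-(s / σ2) * s) * Real.exp ((s / σ2) ^ 2 * σ2 / 2)
      = Real.exp (-(s ^ 2) / (2 * σ2)) := by
    rw [← Real.exp_add]
    congr 1
    field_simp
    ring
  have h1 : (μ {ω | s ≤ S ω}).toReal ≤ Real.exp (-(s ^ 2) / (2 * σ2)) := by
    have := measure_ge_le_exp_mul_mgf (X := S) (μ := μ) (t := s / σ2) s
      (le_of_lt (div_pos hs hσ2)) (hSint _)
    refine this.trans ?_
    rw [← hbd]
    exact mul_le_mul_of_nonneg_left (hmgf _) (le_of_lt (Real.exp_pos _))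
  have h2 : (μ {ω | S ω ≤ -s}).toReal ≤ Real.exp (-(s ^ 2) / (2 * σ2)) := by
    have := measure_le_le_exp_mul_mgf (X := S) (μ := μ) (t := -(s / σ2)) (-s)
      (by simp [le_of_lt (div_pos hs hσ2)]) (hSint _)
    refine this.trans ?_
    have e1 : -(-(s / σ2)) * (-s) = -(s / σ2) * s := by ring
    have e2 : (-(s / σ2)) ^ 2 = (s / σ2) ^ 2 := by ring
    rw [e1, ← hbd]
    refine mul_le_mul_of_nonneg_left ?_ (le_of_lt (Real.exp_pos _))
    calc mgf S μ (-(s / σ2)) ≤ Real.exp ((-(s / σ2)) ^ 2 * σ2 / 2) := hmgf _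
      _ = Real.exp ((s / σ2) ^ 2 * σ2 / 2) := by rw [e2]
  have hsub : {ω | s ≤ |S ω|} ⊆ {ω | s ≤ S ω} ∪ {ω | S ω ≤ -s} := by
    intro ω hω
    rcases le_abs.1 (show s ≤ |S ω| from hω) with h | h
    · exact Or.inl h
    · exact Or.inr (show S ω ≤ -s by linarith)
  calc μ {ω | s ≤ |S ω|} ≤ μ {ω | s ≤ S ω} + μ {ω | S ω ≤ -s} :=
        (measure_mono hsub).trans (measure_union_le _ _)
    _ ≤ ENNReal.ofReal (Real.exp (-(s ^ 2) / (2 * σ2)))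
        + ENNReal.ofReal (Real.exp (-(s ^ 2) / (2 * σ2))) := by
        gcongr
        · exact (ENNReal.le_ofReal_iff_toReal_le (measure_ne_top μ _)
            (le_of_lt (Real.exp_pos _))).2 h1
        · exact (ENNReal.le_ofReal_iff_toReal_le (measure_ne_top μ _)
            (le_of_lt (Real.exp_pos _))).2 h2
    _ = ENNReal.ofReal (2 * Real.exp (-(s ^ 2) / (2 * σ2))) := by
        rw [← ENNReal.ofReal_add (le_of_lt (Real.exp_pos _)) (le_of_lt (Real.exp_pos _))]
        congr 1
        ring




/-- MGF bound à la Bennett–Goodman–Newman: for independent mean-zero `[-1,1]`-valued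
`X_j`, `|∑ b_j X_j| ≤ t₀` a.s., `q ≥ 2` and `0 ≤ t ≤ t₀^{2-q}/(4 ∑ b_j²)`,
`E exp(t |∑ b_j X_j|^q) ≤ 1 + C(q)^q t (∑ b_j²)^{q/2}` with
`C(q) = 2 (q Γ(q/2))^{1/q}`. -/
theorem stmt12 {Ω : Type*} [MeasurableSpace Ω] (μ : Measure Ω) [IsProbabilityMeasure μ]
    (n : ℕ) (X : Fin n → Ω → ℝ)
    (hmeas : ∀ j, Measurable (X j))
    (hindep : iIndepFun X μ)
    (hint : ∀ j, Integrable (X j) μ)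
    (hmean : ∀ j, ∫ ω, X j ω ∂μ = 0)
    (hbdd : ∀ j, ∀ᵐ ω ∂μ, |X j ω| ≤ 1)
    (b : Fin n → ℝ) (t₀ : ℝ)
    (ht₀ : ∀ᵐ ω ∂μ, |∑ j, b j * X j ω| ≤ t₀)
    (q t : ℝ) (hq : 2 ≤ q) (ht0 : 0 ≤ t)
    (ht : t ≤ t₀ ^ (2 - q) / (4 * ∑ j, b j ^ 2)) :
    ∫⁻ ω, ENNReal.ofReal (Real.exp (t * |∑ j, b j * X j ω| ^ q)) ∂μ ≤
      ENNReal.ofReal (1 + (2 * (q * Real.Gamma (q / 2)) ^ (1 / q)) ^ q * t *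
        (∑ j, b j ^ 2) ^ (q / 2)) := by
  have hq0 : (0:ℝ) < q := by linarith
  have hΓpos : 0 < Real.Gamma (q / 2) := Real.Gamma_pos_of_pos (by linarith)
  have hCq : (2 * (q * Real.Gamma (q / 2)) ^ (1 / q)) ^ q
      = 2 ^ q * (q * Real.Gamma (q / 2)) := by
    rw [Real.mul_rpow (by norm_num) (Real.rpow_nonneg (by positivity) _),
      ← Real.rpow_mul (by positivity), one_div, inv_mul_cancel₀ (ne_of_gt hq0), Real.rpow_one]
  set σ2 : ℝ := ∑ j, b j ^ 2 with hσ2def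
  set S : Ω → ℝ := fun ω => ∑ j, b j * X j ω with hSdef
  have hS_meas : Measurable S := Finset.measurable_sum _ (fun j _ => (hmeas j).const_mul (b j))
  rcases eq_or_lt_of_le (show (0:ℝ) ≤ σ2 by positivity) with h0 | hσ2
  · -- degenerate case: all b j = 0
    have hb0 : ∀ j, b j = 0 := by
      intro j
      by_contra hbj
      have h1 : 0 < b j ^ 2 := by positivity
      have h2 : b j ^ 2 ≤ σ2 := Finset.single_le_sum (f := fun j => b j ^ 2)
        (fun i _ => sq_nonneg _) (Finset.mem_univ j)
      linarith [h0.symm ▸ h2]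
    have hS0 : ∀ ω, S ω = 0 := fun ω => Finset.sum_eq_zero fun j _ => by rw [hb0 j, zero_mul]
    have hL : ∀ ω, ENNReal.ofReal (Real.exp (t * |S ω| ^ q)) = 1 := by
      intro ω
      rw [hS0 ω, abs_zero, Real.zero_rpow (ne_of_gt hq0), mul_zero, Real.exp_zero,
        ENNReal.ofReal_one]
    rw [lintegral_congr hL, lintegral_one, measure_univ, ← h0,
      Real.zero_rpow (by positivity : q / 2 ≠ 0), mul_zero, add_zero, ENNReal.ofReal_one]
  · -- main case
    have h4σ : (0:ℝ) < 4 * σ2 := by linarith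
    set g : ℝ → ℝ := fun u => t * q * u ^ (q - 1) * Real.exp (t * u ^ q) with hgdef
    have hg_cont : Continuous g := by
      have c1 : Continuous fun u : ℝ => u ^ (q - 1) :=
        continuous_iff_continuousAt.2 fun x =>
          Real.continuousAt_rpow_const x _ (Or.inr (by linarith))
      have c2 : Continuous fun u : ℝ => u ^ q :=
        continuous_iff_continuousAt.2 fun x =>
          Real.continuousAt_rpow_const x _ (Or.inr (by linarith))
      exact (continuous_const.mul c1).mul (Real.continuous_exp.comp (continuous_const.mul c2))
    have hFTC : ∀ x : ℝ, 0 ≤ x → ∫ u in (0:ℝ)..x, g u = Real.exp (t * x ^ q) - 1 := by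
      intro x hx
      have hderiv : ∀ u ∈ Set.uIcc (0:ℝ) x,
          HasDerivAt (fun y => Real.exp (t * y ^ q)) (g u) u := by
        intro u hu
        have h1 : HasDerivAt (fun y : ℝ => y ^ q) (q * u ^ (q - 1)) u :=
          Real.hasDerivAt_rpow_const (Or.inr (by linarith))
        have h2 := (h1.const_mul t).exp
        convert h2 using 1
        simp only [hgdef]
        ring
      rw [intervalIntegral.integral_eq_sub_of_hasDerivAt hderiv
        (hg_cont.intervalIntegrable _ _)]
      rw [Real.zero_rpow (ne_of_gt hq0), mul_zero, Real.exp_zero]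
    -- rewrite LHS
    have step1 : ∫⁻ ω, ENNReal.ofReal (Real.exp (t * |S ω| ^ q)) ∂μ
        = 1 + ∫⁻ ω, ENNReal.ofReal (∫ u in (0:ℝ)..|S ω|, g u) ∂μ := by
      have : ∀ ω, ENNReal.ofReal (Real.exp (t * |S ω| ^ q))
          = 1 + ENNReal.ofReal (∫ u in (0:ℝ)..|S ω|, g u) := by
        intro ω
        rw [hFTC _ (abs_nonneg _), ← ENNReal.ofReal_one,
          ← ENNReal.ofReal_add (by norm_num)
            (sub_nonneg.2 (Real.one_le_exp (by positivity)))]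
        congr 1
        ring
      rw [lintegral_congr this, lintegral_add_left measurable_const, lintegral_one, measure_univ]
    rw [step1]
    -- layer cake
    have g_nn : ∀ᵐ u ∂(volume.restrict (Set.Ioi (0:ℝ))), 0 ≤ g u := by
      refine (ae_restrict_iff' measurableSet_Ioi).2 (ae_of_all _ fun u hu => ?_)
      have hu' : (0:ℝ) < u := hu
      exact mul_nonneg (mul_nonneg (mul_nonneg ht0 hq0.le)
        (Real.rpow_nonneg hu'.le _)) (Real.exp_pos _).le
    have hlc := lintegral_comp_eq_lintegral_meas_le_mul μ (f := fun ω => |S ω|) (g := g)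
      (ae_of_all _ fun ω => abs_nonneg _) hS_meas.abs.aemeasurable
      (fun u _ => hg_cont.intervalIntegrable _ _) g_nn
    rw [hlc]
    -- pointwise domination of the tail integrand
    set h : ℝ → ℝ := fun s => 2 * t * q * (s ^ (q - 1) * Real.exp (-(1 / (4 * σ2)) * s ^ 2))
      with hhdef
    have key : ∀ s ∈ Set.Ioi (0:ℝ),
        μ {a | s ≤ |S a|} * ENNReal.ofReal (g s) ≤ ENNReal.ofReal (h s) := by
      intro s hs
      have hs' : (0:ℝ) < s := hs
      by_cases hst : s ≤ t₀
      · have ht₀pos : (0:ℝ) < t₀ := lt_of_lt_of_le hs' hst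
        have hkey : t * t₀ ^ (q - 2) ≤ 1 / (4 * σ2) := by
          calc t * t₀ ^ (q - 2) ≤ t₀ ^ (2 - q) / (4 * σ2) * t₀ ^ (q - 2) :=
                mul_le_mul_of_nonneg_right ht (Real.rpow_nonneg ht₀pos.le _)
            _ = t₀ ^ (2 - q + (q - 2)) / (4 * σ2) := by
                rw [div_mul_eq_mul_div, ← Real.rpow_add ht₀pos]
            _ = 1 / (4 * σ2) := by norm_num
        have h2cast : s ^ (2:ℝ) = s ^ 2 := by
          rw [show (2:ℝ) = ((2:ℕ):ℝ) by norm_num, Real.rpow_natCast]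
        have hexp : t * s ^ q ≤ 1 / (4 * σ2) * s ^ 2 := by
          have hsplit : s ^ q = s ^ (q - 2) * s ^ 2 := by
            rw [← h2cast, ← Real.rpow_add hs']
            norm_num
          have hmono : s ^ (q - 2) ≤ t₀ ^ (q - 2) :=
            Real.rpow_le_rpow hs'.le hst (by linarith)
          calc t * s ^ q = t * s ^ (q - 2) * s ^ 2 := by rw [hsplit]; ring
            _ ≤ t * t₀ ^ (q - 2) * s ^ 2 := by
                have := mul_le_mul_of_nonneg_left hmono ht0
                exact mul_le_mul_of_nonneg_right this (sq_nonneg s)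
            _ ≤ 1 / (4 * σ2) * s ^ 2 :=
                mul_le_mul_of_nonneg_right hkey (sq_nonneg s)
        calc μ {a | s ≤ |S a|} * ENNReal.ofReal (g s)
            ≤ ENNReal.ofReal (2 * Real.exp (-(s ^ 2) / (2 * σ2))) * ENNReal.ofReal (g s) :=
              mul_le_mul_left
                (bgn_tail μ X hmeas hindep hint hmean hbdd b hσ2 s hs') _
          _ ≤ ENNReal.ofReal (2 * Real.exp (-(s ^ 2) / (2 * σ2)))
              * ENNReal.ofReal (t * q * s ^ (q - 1) * Real.exp (1 / (4 * σ2) * s ^ 2)) := by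
              refine mul_le_mul_right (ENNReal.ofReal_le_ofReal ?_) _
              simp only [hgdef]
              exact mul_le_mul_of_nonneg_left (Real.exp_le_exp.2 hexp)
                (by positivity)
          _ = ENNReal.ofReal (h s) := by
              rw [← ENNReal.ofReal_mul (by positivity)]
              congr 1
              rw [hhdef]
              have harg : -(s ^ 2) / (2 * σ2) + 1 / (4 * σ2) * s ^ 2
                  = -(1 / (4 * σ2)) * s ^ 2 := by
                field_simp
                ring
              calc 2 * Real.exp (-(s ^ 2) / (2 * σ2))
                    * (t * q * s ^ (q - 1) * Real.exp (1 / (4 * σ2) * s ^ 2))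
                  = 2 * t * q * (s ^ (q - 1)
                    * Real.exp (-(s ^ 2) / (2 * σ2) + 1 / (4 * σ2) * s ^ 2)) := by
                    rw [Real.exp_add]; ring
                _ = 2 * t * q * (s ^ (q - 1) * Real.exp (-(1 / (4 * σ2)) * s ^ 2)) := by
                    rw [harg]
      · have hnull : μ {a | s ≤ |S a|} = 0 := by
          refine measure_mono_null (fun ω hω => ?_) (ae_iff.1 ht₀)
          simp only [Set.mem_setOf_eq] at hω ⊢
          push_neg at hst ⊢
          exact lt_of_lt_of_le hst hω
        rw [hnull, zero_mul]
        exact zero_le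
    have hint_h : IntegrableOn h (Set.Ioi (0:ℝ)) := by
      refine Integrable.integrableOn ?_
      exact (integrable_rpow_mul_exp_neg_mul_sq
        (by positivity : (0:ℝ) < 1 / (4 * σ2)) (by linarith : (-1:ℝ) < q - 1)).const_mul _
    have h_nn : ∀ᵐ s ∂(volume.restrict (Set.Ioi (0:ℝ))), 0 ≤ h s := by
      refine (ae_restrict_iff' measurableSet_Ioi).2 (ae_of_all _ fun s hs => ?_)
      have hs' : (0:ℝ) < s := hs
      exact mul_nonneg (by positivity) (mul_nonneg (Real.rpow_nonneg hs'.le _)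
        (Real.exp_pos _).le)
    have hbound : ∫⁻ s in Set.Ioi (0:ℝ), μ {a | s ≤ |S a|} * ENNReal.ofReal (g s)
        ≤ ENNReal.ofReal (∫ s in Set.Ioi (0:ℝ), h s) := by
      rw [ofReal_integral_eq_lintegral_ofReal hint_h h_nn]
      exact lintegral_mono_ae ((ae_restrict_iff' measurableSet_Ioi).2 (ae_of_all _ key))
    -- compute the integral
    have h2cast' : ∀ s : ℝ, s ^ (2:ℝ) = s ^ 2 := fun s => by
      rw [show (2:ℝ) = ((2:ℕ):ℝ) by norm_num, Real.rpow_natCast]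
    have hintval : ∫ s in Set.Ioi (0:ℝ), h s
        = 2 * t * q * ((1 / (4 * σ2)) ^ (-(q - 1 + 1) / 2) * (1 / 2)
          * Real.Gamma ((q - 1 + 1) / 2)) := by
      rw [hhdef]
      rw [MeasureTheory.integral_const_mul]
      congr 1
      rw [← integral_rpow_mul_exp_neg_mul_rpow (by norm_num : (0:ℝ) < 2)
        (by linarith : (-1:ℝ) < q - 1) (by positivity : (0:ℝ) < 1 / (4 * σ2))]
      refine setIntegral_congr_fun measurableSet_Ioi fun s _ => ?_
      rw [h2cast' s]
    have hb_pow : ((1:ℝ) / (4 * σ2)) ^ (-(q - 1 + 1) / 2) = 2 ^ q * σ2 ^ (q / 2) := by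
      have e1 : -(q - 1 + 1) / 2 = -(q / 2) := by ring
      rw [e1, one_div, Real.inv_rpow h4σ.le, ← Real.rpow_neg h4σ.le, neg_neg,
        Real.mul_rpow (by norm_num : (0:ℝ) ≤ 4) (le_of_lt hσ2)]
      congr 1
      have h24 : (2:ℝ) ^ ((2:ℕ):ℝ) = 4 := by rw [Real.rpow_natCast]; norm_num
      rw [← h24, ← Real.rpow_mul (by norm_num : (0:ℝ) ≤ 2)]
      congr 1
      push_cast
      ring
    calc (1:ℝ≥0∞) + ∫⁻ s in Set.Ioi (0:ℝ), μ {a | s ≤ |S a|} * ENNReal.ofReal (g s)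
        ≤ 1 + ENNReal.ofReal (∫ s in Set.Ioi (0:ℝ), h s) := add_le_add_right hbound _
      _ = ENNReal.ofReal (1 + ∫ s in Set.Ioi (0:ℝ), h s) := by
          rw [ENNReal.ofReal_add (by norm_num) (integral_nonneg_of_ae h_nn), ENNReal.ofReal_one]
      _ = ENNReal.ofReal (1 + (2 * (q * Real.Gamma (q / 2)) ^ (1 / q)) ^ q * t
          * σ2 ^ (q / 2)) := by
          congr 1
          rw [hintval, hCq, hb_pow]
          have : q - 1 + 1 = q := by ring
          rw [this]
          ring
end

section
/- Let (b_j)_{j≤n} ∈ ℝ^n and let (X_j)_{j≤n} be random variables (not necessarily independent) satisfying P(|X_j| > t) ≤ K e^{−t²/b_j²} for all t ≥ 0 and j ≤ n. Then E max_{j≤n} |X_j| ≲_K max_{j≤n} b_j^↓ √(ln(j+1)), where (b_j^↓) is the non-increasing rearrangement of (|b_j|). Conversely, if X_j ~ N(0, b_j²) are independent, then E max_{j≤n} |X_j| ≳ max_{j≤n} b_j^↓ √(ln(j+1)) with an absolute constant. -/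
open MeasureTheory ProbabilityTheory Real
open scoped ENNReal NNReal



lemma vh_ofReal_ciSup {ι : Type*} [Finite ι] [Nonempty ι] (f : ι → ℝ) :
    ENNReal.ofReal (⨆ i, f i) = ⨆ i, ENNReal.ofReal (f i) := by
  obtain ⟨i₀, hi₀⟩ := Finite.exists_max f
  have h1 : (⨆ i, f i) = f i₀ := le_antisymm (ciSup_le hi₀)
    (le_ciSup (Set.Finite.bddAbove (Set.finite_range f)) i₀)
  refine le_antisymm ?_ ?_
  · rw [h1]; exact le_iSup (fun i => ENNReal.ofReal (f i)) i₀
  · exact iSup_le fun i => ENNReal.ofReal_le_ofReal (h1 ▸ hi₀ i)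

lemma vh_tele (n : ℕ) :
    ∑ j ∈ Finset.range n, ((1:ℝ)/((j+1)*(j+2))) = 1 - 1/(n+1) := by
  induction n with
  | zero => simp
  | succ m ih =>
    rw [Finset.sum_range_succ, ih]
    have h1 : ((m:ℝ)+1) ≠ 0 := by positivity
    have h2 : ((m:ℝ)+2) ≠ 0 := by positivity
    push_cast
    field_simp
    ring

lemma vh_tele_le (n : ℕ) :
    ∑ j ∈ Finset.range n, ((1:ℝ)/((j+1)*(j+2))) ≤ 1 := by
  rw [vh_tele]
  have : (0:ℝ) < 1/(n+1) := by positivity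
  linarith



noncomputable def vhA : ℝ := (Real.sqrt (2*Real.pi))⁻¹ * Real.exp (-1)

lemma vhA_pos : 0 < vhA := by
  unfold vhA
  have := Real.pi_pos
  positivity

lemma vhA_le_one : vhA ≤ 1 := by
  unfold vhA
  have h1 : (1:ℝ) ≤ Real.sqrt (2*Real.pi) := by
    rw [show (1:ℝ) = Real.sqrt 1 by simp]
    apply Real.sqrt_le_sqrt
    nlinarith [Real.pi_gt_three]
  have h3 : (Real.sqrt (2*Real.pi))⁻¹ ≤ 1 := by
    rw [inv_le_one_iff₀]; right; exact h1
  have h4 : Real.exp (-1) ≤ 1 := by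
    rw [Real.exp_le_one_iff]; norm_num
  nlinarith [Real.exp_pos (-1), Real.exp_nonneg (-1)]

/-- Gaussian lower tail bound: `P(N(0,v) > s) ≥ a e^{-(s/√v)²}` for `s ≥ 0`. -/
lemma vh_gauss_tail (v : ℝ≥0) (hv : v ≠ 0) (s : ℝ) (hs : 0 ≤ s) :
    ENNReal.ofReal (vhA * Real.exp (-(s / Real.sqrt v)^2)) ≤
      gaussianReal 0 v (Set.Ioi s) := by
  have hv0 : (0:ℝ) < (v:ℝ) := by
    have : v ≠ 0 := hv
    positivity
  set w : ℝ := Real.sqrt v with hw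
  have hw0 : 0 < w := Real.sqrt_pos.mpr hv0
  have hw2 : w^2 = (v:ℝ) := Real.sq_sqrt hv0.le
  -- min density on the interval
  set d : ℝ := (Real.sqrt (2*Real.pi*v))⁻¹ * Real.exp (-(s+w)^2 / (2*v)) with hd
  have hd0 : 0 ≤ d := by
    have := Real.pi_pos
    positivity
  have key : ENNReal.ofReal d * volume (Set.Ioc s (s+w)) ≤ gaussianReal 0 v (Set.Ioi s) := by
    calc ENNReal.ofReal d * volume (Set.Ioc s (s+w))
        = ∫⁻ x in Set.Ioc s (s+w), ENNReal.ofReal d := (setLIntegral_const _ _).symm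
      _ ≤ ∫⁻ x in Set.Ioc s (s+w), gaussianPDF 0 v x := by
          refine setLIntegral_mono (measurable_gaussianPDF 0 v) (fun x hx => ?_)
          rw [gaussianPDF]
          apply ENNReal.ofReal_le_ofReal
          rw [gaussianPDFReal]
          have hx1 : s < x := hx.1
          have hx2 : x ≤ s + w := hx.2
          have hxx : (x - 0)^2 ≤ (s+w)^2 := by nlinarith
          rw [hd]
          gcongr
      _ ≤ gaussianReal 0 v (Set.Ioi s) := by
          rw [gaussianReal_apply 0 hv]
          exact lintegral_mono_set (Set.Ioc_subset_Ioi_self)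
  refine le_trans ?_ key
  have hvol : volume (Set.Ioc s (s+w)) = ENNReal.ofReal w := by
    rw [Real.volume_Ioc]; congr 1; ring
  rw [hvol, ← ENNReal.ofReal_mul hd0]
  apply ENNReal.ofReal_le_ofReal
  have hsplit : Real.sqrt (2*Real.pi*(v:ℝ)) = Real.sqrt (2*Real.pi) * w := by
    rw [hw, Real.sqrt_mul (by positivity)]
  have hexp : Real.exp (-1) * Real.exp (-(s/w)^2) ≤ Real.exp (-(s+w)^2 / (2*(v:ℝ))) := by
    rw [← Real.exp_add]
    apply Real.exp_le_exp.mpr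
    rw [div_pow, ← hw2]
    have hrw : (-1 : ℝ) + -(s^2/w^2) = (-(w^2)*2 - 2*s^2)/(2*w^2) := by
      field_simp; ring
    rw [hrw, div_le_div_iff₀ (by positivity) (by positivity)]
    nlinarith [sq_nonneg (s - w)]
  calc vhA * Real.exp (-(s / w)^2)
      = (Real.sqrt (2*Real.pi))⁻¹ * (Real.exp (-1) * Real.exp (-(s/w)^2)) := by
        rw [vhA]; ring
    _ ≤ (Real.sqrt (2*Real.pi))⁻¹ * Real.exp (-(s+w)^2 / (2*(v:ℝ))) := by
        have := Real.pi_pos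
        apply mul_le_mul_of_nonneg_left hexp (by positivity)
    _ = d * w := by
        rw [hd, hsplit, mul_inv]
        field_simp

lemma vh_icc (v : ℝ≥0) (hv : v ≠ 0) (s : ℝ) (hs : 0 ≤ s) {q : ℝ} (hq0 : 0 ≤ q)
    (hq : q ≤ vhA * Real.exp (-(s / Real.sqrt v)^2)) :
    gaussianReal 0 v (Set.Icc (-s) s) ≤ ENNReal.ofReal (1 - q) := by
  have hcompl : gaussianReal 0 v (Set.Iic s) + gaussianReal 0 v (Set.Ioi s) = 1 := by
    have := measure_add_measure_compl (μ := gaussianReal 0 v) (measurableSet_Iic (a := s))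
    rwa [Set.compl_Iic, measure_univ] at this
  have h1 : gaussianReal 0 v (Set.Icc (-s) s) ≤ 1 - gaussianReal 0 v (Set.Ioi s) := by
    refine le_trans (measure_mono Set.Icc_subset_Iic_self) ?_
    rw [ENNReal.eq_sub_of_add_eq (measure_ne_top _ _) hcompl]
  refine h1.trans ?_
  calc (1:ℝ≥0∞) - gaussianReal 0 v (Set.Ioi s)
      ≤ 1 - ENNReal.ofReal q := by
        refine tsub_le_tsub_left ?_ 1
        exact le_trans (ENNReal.ofReal_le_ofReal hq) (vh_gauss_tail v hv s hs)
    _ = ENNReal.ofReal (1 - q) := by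
        rw [ENNReal.ofReal_sub _ hq0, ENNReal.ofReal_one]



set_option maxHeartbeats 1000000 in
theorem vh_lower :
    (∃ c : ℝ, 0 < c ∧
      ∀ (Ω : Type) (_ : MeasurableSpace Ω) (μ : Measure Ω), IsProbabilityMeasure μ →
      ∀ (n : ℕ) (b : Fin n → ℝ) (X : Fin n → Ω → ℝ),
      (∀ j, Measurable (X j)) →
      iIndepFun X μ →
      (∀ j, Measure.map (X j) μ = gaussianReal 0 (Real.toNNReal (b j ^ 2))) →
      ∀ σ : Equiv.Perm (Fin n), (∀ j j' : Fin n, j ≤ j' → |b (σ j')| ≤ |b (σ j)|) →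
      ENNReal.ofReal (c * ⨆ j : Fin n,
          |b (σ j)| * Real.sqrt (Real.log ((j : ℕ) + 2))) ≤
        ∫⁻ ω, ENNReal.ofReal (⨆ j, |X j ω|) ∂μ) := by
  set ρ : ℝ := Real.exp (-(vhA / Real.sqrt 2)) with hρdef
  have hρ1 : ρ < 1 := by
    rw [hρdef, Real.exp_lt_one_iff]
    have := vhA_pos
    have h2 : (0:ℝ) < Real.sqrt 2 := by positivity
    have : 0 < vhA / Real.sqrt 2 := by positivity
    linarith
  have hρ0 : 0 < ρ := Real.exp_pos _
  refine ⟨(1 - ρ) / Real.sqrt 2, div_pos (by linarith) (by positivity), ?_⟩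
  intro Ω mΩ μ hμ n b X hXm hInd hmap σ hsort
  rcases Nat.eq_zero_or_pos n with hn | hn
  · subst hn
    simp only [Real.iSup_of_isEmpty, mul_zero, ENNReal.ofReal_zero]
    exact zero_le
  haveI : Nonempty (Fin n) := ⟨⟨0, hn⟩⟩
  set T : Fin n → ℝ := fun k => |b (σ k)| * Real.sqrt (Real.log ((k:ℕ)+2)) with hT
  obtain ⟨k₀, hk₀⟩ := Finite.exists_max T
  have hbddT : BddAbove (Set.range T) := Set.Finite.bddAbove (Set.finite_range T)
  have hM : (⨆ k, T k) = T k₀ := le_antisymm (ciSup_le hk₀) (le_ciSup hbddT k₀)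
  rw [hM]
  by_cases hβ : b (σ k₀) = 0
  · rw [hT]; simp [hβ, zero_le]
  have hβ0 : 0 < |b (σ k₀)| := abs_pos.mpr hβ
  have hk2 : (1:ℝ) < (k₀:ℕ) + 2 := by
    have : (0:ℝ) ≤ ((k₀:ℕ):ℝ) := Nat.cast_nonneg _
    linarith
  have hlog : 0 < Real.log ((k₀:ℕ)+2) := Real.log_pos hk2
  set β := |b (σ k₀)| with hβdef
  set s : ℝ := β * Real.sqrt (Real.log ((k₀:ℕ)+2)) / Real.sqrt 2 with hsdef
  have hs0 : 0 < s := div_pos (mul_pos hβ0 (Real.sqrt_pos.mpr hlog)) (by positivity)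
  set q : ℝ := vhA * Real.exp (-(s/β)^2) with hqdef
  have hq0 : 0 < q := mul_pos vhA_pos (Real.exp_pos _)
  have hq1 : q ≤ 1 := by
    have h1 : Real.exp (-(s/β)^2) ≤ 1 := by
      rw [Real.exp_le_one_iff]
      have : (0:ℝ) ≤ (s/β)^2 := sq_nonneg _
      linarith
    nlinarith [vhA_pos, vhA_le_one]
  -- q = vhA / √(k₀+2)
  have hsβ : s / β = Real.sqrt (Real.log ((k₀:ℕ)+2)) / Real.sqrt 2 := by
    rw [hsdef]; field_simp
  have hq_eq : q = vhA / Real.sqrt ((k₀:ℕ)+2) := by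
    rw [hqdef, hsβ, div_pow, Real.sq_sqrt hlog.le, Real.sq_sqrt (by norm_num : (0:ℝ) ≤ 2)]
    have : Real.exp (-(Real.log ((k₀:ℕ)+2) / 2)) = (Real.sqrt ((k₀:ℕ)+2))⁻¹ := by
      rw [← Real.log_sqrt (by linarith), Real.exp_neg, Real.exp_log (Real.sqrt_pos.mpr (by linarith))]
    rw [this, div_eq_mul_inv]
  -- per-coordinate bound
  have hcoord : ∀ i : Fin n, i ≤ k₀ →
      μ (X (σ i) ⁻¹' Set.Icc (-s) s) ≤ ENNReal.ofReal (1 - q) := by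
    intro i hi
    have hble : β ≤ |b (σ i)| := hsort i k₀ hi
    have hbi0 : 0 < |b (σ i)| := lt_of_lt_of_le hβ0 hble
    have hvco : (((b (σ i) ^ 2).toNNReal : ℝ≥0) : ℝ) = b (σ i)^2 :=
      Real.coe_toNNReal _ (sq_nonneg _)
    have hvs : Real.sqrt ((b (σ i) ^ 2).toNNReal : ℝ≥0) = |b (σ i)| := by
      rw [hvco, Real.sqrt_sq_eq_abs]
    have hvne : (b (σ i) ^ 2).toNNReal ≠ 0 := by
      rw [ne_eq, Real.toNNReal_eq_zero, not_le]
      have : b (σ i) ≠ 0 := abs_pos.mp hbi0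
      positivity
    have hmap' : μ (X (σ i) ⁻¹' Set.Icc (-s) s)
        = gaussianReal 0 (b (σ i) ^ 2).toNNReal (Set.Icc (-s) s) := by
      rw [← hmap (σ i), Measure.map_apply (hXm (σ i)) measurableSet_Icc]
    rw [hmap']
    apply vh_icc _ hvne s hs0.le hq0.le
    rw [hqdef, hvs]
    have hdd : s / |b (σ i)| ≤ s / β := div_le_div_of_nonneg_left hs0.le hβ0 hble
    have hsq : (s/|b (σ i)|)^2 ≤ (s/β)^2 := by
      apply pow_le_pow_left₀ (by positivity) hdd
    exact mul_le_mul_of_nonneg_left (Real.exp_le_exp.mpr (by linarith)) vhA_pos.le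
  -- product bound
  set S : Finset (Fin n) := (Finset.Iic k₀).image σ with hS
  have hcard : S.card = (k₀:ℕ) + 1 := by
    rw [hS, Finset.card_image_of_injective _ σ.injective, Fin.card_Iic]
  set B : Set Ω := ⋂ j ∈ S, X j ⁻¹' Set.Icc (-s) s with hB
  have hBmeas : MeasurableSet B := by
    apply MeasurableSet.biInter (Finset.countable_toSet S)
    exact fun j _ => (hXm j) measurableSet_Icc
  have hprod : μ B = ∏ j ∈ S, μ (X j ⁻¹' Set.Icc (-s) s) :=
    hInd.measure_inter_preimage_eq_mul S (fun i _ => measurableSet_Icc)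
  have hBle : μ B ≤ ENNReal.ofReal ρ := by
    rw [hprod]
    have hreal : (1-q)^((k₀:ℕ)+1) ≤ ρ := by
      have h1q : 1 - q ≤ Real.exp (-q) := by nlinarith [Real.add_one_le_exp (-q)]
      calc (1-q)^((k₀:ℕ)+1) ≤ (Real.exp (-q))^((k₀:ℕ)+1) := by
            apply pow_le_pow_left₀ (by linarith) h1q
        _ = Real.exp (((((k₀:ℕ)+1):ℕ):ℝ) * (-q)) := (Real.exp_nat_mul _ _).symm
        _ ≤ ρ := by
            rw [hρdef, Real.exp_le_exp]
            have hsq2 : (0:ℝ) < Real.sqrt 2 := by positivity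
            have hk20 : (0:ℝ) < ((k₀:ℕ):ℝ)+2 := by linarith
            have hsqk : (0:ℝ) < Real.sqrt (((k₀:ℕ):ℝ)+2) := Real.sqrt_pos.mpr hk20
            have hkey : Real.sqrt (((k₀:ℕ):ℝ)+2) ≤ Real.sqrt 2 * (((k₀:ℕ):ℝ)+1) := by
              rw [show Real.sqrt 2 * (((k₀:ℕ):ℝ)+1) = Real.sqrt (2 * (((k₀:ℕ):ℝ)+1)^2) by
                rw [Real.sqrt_mul (by norm_num), Real.sqrt_sq (by positivity)]]
              apply Real.sqrt_le_sqrt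
              nlinarith [(by positivity : (0:ℝ) ≤ ((k₀:ℕ):ℝ))]
            have h2 : vhA / Real.sqrt 2 ≤ (((k₀:ℕ):ℝ)+1) * q := by
              rw [hq_eq, mul_div_assoc', div_le_div_iff₀ hsq2 hsqk]
              nlinarith [hkey, vhA_pos]
            push_cast
            nlinarith [h2]
    calc ∏ j ∈ S, μ (X j ⁻¹' Set.Icc (-s) s)
        ≤ ∏ _j ∈ S, ENNReal.ofReal (1 - q) := by
          apply Finset.prod_le_prod'
          intro j hj
          rw [hS, Finset.mem_image] at hj
          obtain ⟨i, hi, rfl⟩ := hj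
          exact hcoord i (Finset.mem_Iic.mp hi)
      _ = ENNReal.ofReal (1 - q) ^ ((k₀:ℕ)+1) := by rw [Finset.prod_const, hcard]
      _ = ENNReal.ofReal ((1 - q)^((k₀:ℕ)+1)) := (ENNReal.ofReal_pow (by linarith) _).symm
      _ ≤ ENNReal.ofReal ρ := ENNReal.ofReal_le_ofReal hreal
  -- pass to the supremum functional
  set F : Ω → ℝ≥0∞ := fun ω => ⨆ j, ENNReal.ofReal |X j ω| with hF
  have hFmeas : Measurable F := by
    apply Measurable.iSup
    intro j
    exact ((hXm j).abs).ennreal_ofReal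
  have hsub : Bᶜ ⊆ {ω | ENNReal.ofReal s ≤ F ω} := by
    intro ω hω
    rw [hB, Set.compl_iInter₂] at hω
    simp only [Set.mem_iUnion, Set.mem_compl_iff, Set.mem_preimage, Set.mem_Icc] at hω
    obtain ⟨j, hjS, hj⟩ := hω
    have hjabs : s < |X j ω| := by
      by_contra h
      push_neg at h
      rw [abs_le] at h
      exact hj h
    calc ENNReal.ofReal s ≤ ENNReal.ofReal |X j ω| := ENNReal.ofReal_le_ofReal hjabs.le
      _ ≤ F ω := le_iSup (fun j => ENNReal.ofReal |X j ω|) j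
  have hmeasge : ENNReal.ofReal (1 - ρ) ≤ μ {ω | ENNReal.ofReal s ≤ F ω} := by
    calc ENNReal.ofReal (1-ρ) = 1 - ENNReal.ofReal ρ := by
          rw [ENNReal.ofReal_sub _ hρ0.le, ENNReal.ofReal_one]
      _ ≤ 1 - μ B := tsub_le_tsub_left hBle 1
      _ = μ Bᶜ := (prob_compl_eq_one_sub hBmeas).symm
      _ ≤ μ {ω | ENNReal.ofReal s ≤ F ω} := measure_mono hsub
  calc ENNReal.ofReal ((1 - ρ) / Real.sqrt 2 * T k₀)
      = ENNReal.ofReal s * ENNReal.ofReal (1-ρ) := by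
        rw [← ENNReal.ofReal_mul hs0.le]
        congr 1
        simp only [hT, hsdef]
        ring
    _ ≤ ENNReal.ofReal s * μ {ω | ENNReal.ofReal s ≤ F ω} := mul_le_mul_right hmeasge _
    _ ≤ ∫⁻ ω, F ω ∂μ := mul_meas_ge_le_lintegral₀ hFmeas.aemeasurable _
    _ = ∫⁻ ω, ENNReal.ofReal (⨆ j, |X j ω|) ∂μ := by
        apply lintegral_congr
        intro ω
        rw [vh_ofReal_ciSup]



set_option maxHeartbeats 1000000 in
theorem vh_upper :
    (∀ K : ℝ, 0 < K → ∃ C : ℝ, 0 < C ∧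
      ∀ (Ω : Type) (_ : MeasurableSpace Ω) (μ : Measure Ω), IsProbabilityMeasure μ →
      ∀ (n : ℕ) (b : Fin n → ℝ) (X : Fin n → Ω → ℝ),
      (∀ j, ∀ t : ℝ, 0 ≤ t →
        μ {ω | t * |b j| < |X j ω|} ≤ ENNReal.ofReal (K * Real.exp (-t ^ 2))) →
      ∀ σ : Equiv.Perm (Fin n), (∀ j j' : Fin n, j ≤ j' → |b (σ j')| ≤ |b (σ j)|) →
      ∫⁻ ω, ENNReal.ofReal (⨆ j, |X j ω|) ∂μ ≤
        ENNReal.ofReal (C * ⨆ j : Fin n,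
          |b (σ j)| * Real.sqrt (Real.log ((j : ℕ) + 2)))) := by
  intro K hK
  refine ⟨3 + K, by linarith, ?_⟩
  intro Ω mΩ μ hμ n b X hX σ hsort
  rcases Nat.eq_zero_or_pos n with hn | hn
  · subst hn
    simp only [Real.iSup_of_isEmpty, ENNReal.ofReal_zero, lintegral_zero]
    exact zero_le
  haveI : Nonempty (Fin n) := ⟨⟨0, hn⟩⟩
  set T : Fin n → ℝ := fun j => |b (σ j)| * Real.sqrt (Real.log ((j:ℕ)+2)) with hT
  set M : ℝ := ⨆ j, T j with hMdef
  have hbddT : BddAbove (Set.range T) := Set.Finite.bddAbove (Set.finite_range T)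
  have hTnn : ∀ j, 0 ≤ T j := fun j => by
    rw [hT]; positivity
  have hTle : ∀ j, T j ≤ M := fun j => le_ciSup hbddT j
  have hM0 : 0 ≤ M := le_trans (hTnn ⟨0, hn⟩) (hTle ⟨0, hn⟩)
  set f : Ω → ℝ := fun ω => ⨆ j, |X j ω| with hf
  have hbddX : ∀ ω, BddAbove (Set.range fun j => |X j ω|) :=
    fun ω => Set.Finite.bddAbove (Set.finite_range _)
  have hf0 : ∀ ω, 0 ≤ f ω := fun ω =>
    le_trans (abs_nonneg _) (le_ciSup (hbddX ω) ⟨0, hn⟩)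
  have hflt : ∀ (c : ℝ) (ω : Ω), c < f ω → ∃ j, c < |X j ω| := by
    intro c ω hc
    exact (lt_ciSup_iff (hbddX ω)).mp hc
  rcases eq_or_lt_of_le hM0 with hM | hM
  · -- M = 0 : all b j vanish and the X j are a.e. 0
    have hb0 : ∀ j, b j = 0 := by
      intro j
      have h1 : T (σ.symm j) ≤ 0 := by rw [hM]; exact hTle _
      rw [hT] at h1
      simp only [Equiv.apply_symm_apply] at h1
      have h2 : 0 < Real.sqrt (Real.log (((σ.symm j : ℕ):ℝ)+2)) := by
        apply Real.sqrt_pos.mpr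
        apply Real.log_pos
        have : (0:ℝ) ≤ ((σ.symm j : ℕ):ℝ) := Nat.cast_nonneg _
        linarith
      have := abs_nonneg (b j)
      have habs : |b j| = 0 := by nlinarith
      exact abs_eq_zero.mp habs
    have hnull : ∀ j : Fin n, μ {ω | 0 < |X j ω|} = 0 := by
      intro j
      have hle : ∀ m : ℕ, μ {ω | 0 < |X j ω|} ≤ ENNReal.ofReal (K * Real.exp (-(m:ℝ))) := by
        intro m
        have hs := hX j (Real.sqrt m) (Real.sqrt_nonneg _)
        rw [hb0 j, abs_zero, mul_zero, Real.sq_sqrt (Nat.cast_nonneg m)] at hs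
        exact hs
      have htend : Filter.Tendsto (fun m : ℕ => ENNReal.ofReal (K * Real.exp (-(m:ℝ))))
          Filter.atTop (nhds 0) := by
        rw [show (0:ℝ≥0∞) = ENNReal.ofReal 0 by simp]
        apply ENNReal.tendsto_ofReal
        rw [show (0:ℝ) = K * 0 by ring]
        apply Filter.Tendsto.const_mul
        exact Real.tendsto_exp_neg_atTop_nhds_zero.comp tendsto_natCast_atTop_atTop
      have := ge_of_tendsto' htend hle
      exact le_antisymm this zero_le
    have hae : ∀ᵐ ω ∂μ, ENNReal.ofReal (f ω) = 0 := by
      have hsub : {ω | ¬ (ENNReal.ofReal (f ω) = 0)} ⊆ ⋃ j, {ω | 0 < |X j ω|} := by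
        intro ω hω
        simp only [Set.mem_setOf_eq, ENNReal.ofReal_eq_zero, not_le] at hω
        obtain ⟨j, hj⟩ := hflt 0 ω hω
        exact Set.mem_iUnion.mpr ⟨j, hj⟩
      exact measure_mono_null hsub (measure_iUnion_null hnull)
    calc ∫⁻ ω, ENNReal.ofReal (f ω) ∂μ = ∫⁻ _, 0 ∂μ := lintegral_congr_ae hae
      _ = 0 := lintegral_zero
      _ ≤ _ := zero_le
  · -- M > 0
    set A : ℕ → Set Ω := fun m => toMeasurable μ {ω | (m:ℝ)*M < f ω} with hA
    have hAm : ∀ m, MeasurableSet (A m) := fun m => measurableSet_toMeasurable _ _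
    set g : Ω → ℝ≥0∞ := fun ω =>
      ENNReal.ofReal (3*M) + ∑' i : ℕ, (A (i+2)).indicator (fun _ => ENNReal.ofReal M) ω with hg
    -- pointwise bound
    have hpt : ∀ ω, ENNReal.ofReal (f ω) ≤ g ω := by
      intro ω
      by_cases hc : f ω ≤ 3*M
      · exact le_trans (ENNReal.ofReal_le_ofReal hc) (self_le_add_right _ _)
      push_neg at hc
      set k : ℕ := ⌊f ω / M⌋₊ with hk
      have hk3 : 3 ≤ k := Nat.le_floor (by rw [Nat.cast_ofNat, le_div_iff₀ hM]; linarith)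
      have hkf : (k:ℝ) * M ≤ f ω := by
        rw [← le_div_iff₀ hM]; exact Nat.floor_le (div_nonneg (hf0 ω) hM0)
      have hfk : f ω < ((k:ℝ)+1) * M := by
        rw [← div_lt_iff₀ hM]
        exact_mod_cast Nat.lt_floor_add_one (f ω / M)
      have hsumge : ((k-2:ℕ):ℝ≥0∞) * ENNReal.ofReal M ≤
          ∑' i : ℕ, (A (i+2)).indicator (fun _ => ENNReal.ofReal M) ω := by
        have h1 : ∀ i ∈ Finset.range (k-2),
            (A (i+2)).indicator (fun _ => ENNReal.ofReal M) ω = ENNReal.ofReal M := by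
          intro i hi
          rw [Finset.mem_range] at hi
          have hik : i + 2 < k := by omega
          have hmem : ω ∈ {ω | ((i+2:ℕ):ℝ)*M < f ω} := by
            have hcast : ((i+2:ℕ):ℝ) < (k:ℝ) := by exact_mod_cast hik
            have : ((i+2:ℕ):ℝ)*M < (k:ℝ)*M := by nlinarith
            exact Set.mem_setOf_eq ▸ lt_of_lt_of_le this hkf
          have : ω ∈ A (i+2) := subset_toMeasurable μ _ (by exact_mod_cast hmem)
          rw [Set.indicator_of_mem this]
        calc ((k-2:ℕ):ℝ≥0∞) * ENNReal.ofReal M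
            = ∑ i ∈ Finset.range (k-2), (A (i+2)).indicator (fun _ => ENNReal.ofReal M) ω := by
              rw [Finset.sum_congr rfl h1, Finset.sum_const, Finset.card_range, nsmul_eq_mul]
          _ ≤ _ := ENNReal.sum_le_tsum _
      calc ENNReal.ofReal (f ω) ≤ ENNReal.ofReal (3*M + ((k-2:ℕ):ℝ)*M) := by
            apply ENNReal.ofReal_le_ofReal
            have hcast : ((k-2:ℕ):ℝ) = (k:ℝ) - 2 := by
              have : (2:ℕ) ≤ k := by omega
              push_cast [Nat.cast_sub this]
              ring
            rw [hcast]; nlinarith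
        _ = ENNReal.ofReal (3*M) + ((k-2:ℕ):ℝ≥0∞) * ENNReal.ofReal M := by
            rw [ENNReal.ofReal_add (by positivity) (by positivity), ← ENNReal.ofReal_natCast,
              ← ENNReal.ofReal_mul (by positivity)]
        _ ≤ g ω := add_le_add_right hsumge _
    -- tail bound for each level
    have htail : ∀ i : ℕ, μ {ω | ((i+2:ℕ):ℝ)*M < f ω} ≤
        ENNReal.ofReal (K * (4⁻¹:ℝ)^(i+1)) := by
      intro i
      have hcover : {ω | ((i+2:ℕ):ℝ)*M < f ω} ⊆
          ⋃ j : Fin n, {ω | ((i+2:ℕ):ℝ)*M < |X (σ j) ω|} := by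
        intro ω hω
        obtain ⟨j, hj⟩ := hflt _ ω hω
        exact Set.mem_iUnion.mpr ⟨σ.symm j, by simpa using hj⟩
      refine le_trans (le_trans (measure_mono hcover) (measure_iUnion_le _)) ?_
      rw [tsum_fintype]
      have hterm : ∀ j : Fin n, μ {ω | ((i+2:ℕ):ℝ)*M < |X (σ j) ω|} ≤
          ENNReal.ofReal (K * (4⁻¹:ℝ)^(i+1) * (1/((((j:ℕ):ℝ)+1)*(((j:ℕ):ℝ)+2)))) := by
        intro j
        set L : ℝ := Real.log (((j:ℕ):ℝ)+2) with hL
        have hj2 : (2:ℝ) ≤ ((j:ℕ):ℝ)+2 := by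
          have : (0:ℝ) ≤ ((j:ℕ):ℝ) := Nat.cast_nonneg _
          linarith
        have hLpos : 0 < L := Real.log_pos (by linarith)
        have hL2 : Real.log 2 ≤ L := Real.log_le_log (by norm_num) hj2
        set t : ℝ := ((i+2:ℕ):ℝ) * Real.sqrt L with ht
        have ht0 : 0 ≤ t := by positivity
        have hsub : {ω | ((i+2:ℕ):ℝ)*M < |X (σ j) ω|} ⊆
            {ω | t * |b (σ j)| < |X (σ j) ω|} := by
          intro ω hω
          simp only [Set.mem_setOf_eq] at hω ⊢
          refine lt_of_le_of_lt ?_ hω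
          have h1 : t * |b (σ j)| = ((i+2:ℕ):ℝ) * T j := by
            rw [ht, hT, hL]; ring
          rw [h1]
          have : (0:ℝ) ≤ ((i+2:ℕ):ℝ) := Nat.cast_nonneg _
          nlinarith [hTle j]
        refine le_trans (measure_mono hsub) (le_trans (hX (σ j) t ht0) ?_)
        apply ENNReal.ofReal_le_ofReal
        have hm2 : (2:ℝ) ≤ ((i+2:ℕ):ℝ) := by
          have : (0:ℝ) ≤ ((i:ℕ):ℝ) := Nat.cast_nonneg _
          push_cast
          linarith
        have ht2 : t^2 = ((i+2:ℕ):ℝ)^2 * L := by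
          rw [ht, mul_pow, Real.sq_sqrt hLpos.le]
        set m : ℝ := ((i+2:ℕ):ℝ) with hm
        have hexp1 : Real.exp (-t^2) = Real.exp (-(2*L)) * Real.exp (-((m^2-2)*L)) := by
          rw [← Real.exp_add, ht2]; ring_nf
        have hexp2 : Real.exp (-(2*L)) = 1/(((j:ℕ):ℝ)+2)/(((j:ℕ):ℝ)+2) := by
          have hexpL : Real.exp L = ((j:ℕ):ℝ)+2 := Real.exp_log (by linarith)
          rw [two_mul, neg_add, Real.exp_add, Real.exp_neg, hexpL]
          field_simp
        have hlog2 : (0:ℝ) < Real.log 2 := Real.log_pos (by norm_num)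
        have hexp3 : Real.exp (-((m^2-2)*L)) ≤ (4⁻¹:ℝ)^(i+1) := by
          have h1 : Real.exp (-((m^2-2)*L)) ≤ Real.exp (-((m^2-2)*Real.log 2)) := by
            apply Real.exp_le_exp.mpr
            have hm22 : 0 ≤ m^2 - 2 := by nlinarith
            nlinarith
          refine h1.trans ?_
          have h4 : (4⁻¹:ℝ) = Real.exp (-(2*Real.log 2)) := by
            have hl4 : Real.log 4 = 2*Real.log 2 := by
              rw [show (4:ℝ) = 2^2 by norm_num, Real.log_pow]
              push_cast; ring
            rw [← hl4, Real.exp_neg, Real.exp_log (by norm_num)]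
          rw [h4, ← Real.exp_nat_mul, Real.exp_le_exp]
          have hmc : m = ((i:ℕ):ℝ) + 2 := by rw [hm]; push_cast; ring
          have hic : (0:ℝ) ≤ ((i:ℕ):ℝ) := Nat.cast_nonneg _
          have hmsq : m^2 = ((i:ℕ):ℝ)^2 + 4*((i:ℕ):ℝ) + 4 := by rw [hmc]; ring
          have hco : 2*(((i:ℕ):ℝ)+1) ≤ m^2-2 := by
            rw [hmsq]; nlinarith [sq_nonneg (((i:ℕ):ℝ))]
          push_cast
          nlinarith [mul_le_mul_of_nonneg_right hco hlog2.le]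
        have hinv : 1/(((j:ℕ):ℝ)+2)/(((j:ℕ):ℝ)+2) ≤ 1/((((j:ℕ):ℝ)+1)*(((j:ℕ):ℝ)+2)) := by
          rw [div_div, one_div, one_div]
          apply inv_anti₀
          · positivity
          · nlinarith
        calc K * Real.exp (-t^2)
            = K * (Real.exp (-(2*L)) * Real.exp (-((m^2-2)*L))) := by rw [hexp1]
          _ = K * ((1/(((j:ℕ):ℝ)+2)/(((j:ℕ):ℝ)+2)) * Real.exp (-((m^2-2)*L))) := by
              rw [hexp2]
          _ ≤ K * ((1/((((j:ℕ):ℝ)+1)*(((j:ℕ):ℝ)+2))) * (4⁻¹:ℝ)^(i+1)) := by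
              have he0 : (0:ℝ) ≤ Real.exp (-((m^2-2)*L)) := (Real.exp_pos _).le
              have hi0 : (0:ℝ) ≤ 1/(((j:ℕ):ℝ)+2)/(((j:ℕ):ℝ)+2) := by positivity
              have := mul_le_mul hinv hexp3 he0 (by positivity)
              nlinarith
          _ = K * (4⁻¹:ℝ)^(i+1) * (1/((((j:ℕ):ℝ)+1)*(((j:ℕ):ℝ)+2))) := by ring
      calc ∑ j : Fin n, μ {ω | ((i+2:ℕ):ℝ)*M < |X (σ j) ω|}
          ≤ ∑ j : Fin n, ENNReal.ofReal
              (K * (4⁻¹:ℝ)^(i+1) * (1/((((j:ℕ):ℝ)+1)*(((j:ℕ):ℝ)+2)))) :=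
            Finset.sum_le_sum (fun j _ => hterm j)
        _ = ENNReal.ofReal (∑ j : Fin n,
              K * (4⁻¹:ℝ)^(i+1) * (1/((((j:ℕ):ℝ)+1)*(((j:ℕ):ℝ)+2)))) :=
            (ENNReal.ofReal_sum_of_nonneg (fun j _ => by positivity)).symm
        _ ≤ ENNReal.ofReal (K * (4⁻¹:ℝ)^(i+1)) := by
            apply ENNReal.ofReal_le_ofReal
            rw [← Finset.mul_sum]
            have hsum : ∑ j : Fin n, (1/((((j:ℕ):ℝ)+1)*(((j:ℕ):ℝ)+2)))
                = ∑ j ∈ Finset.range n, ((1:ℝ)/((j+1)*(j+2))) :=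
              Fin.sum_univ_eq_sum_range (fun m : ℕ => ((1:ℝ)/(((m:ℝ)+1)*((m:ℝ)+2)))) n
            rw [hsum]
            have h1 := vh_tele_le n
            have h2 : (0:ℝ) ≤ ∑ j ∈ Finset.range n, ((1:ℝ)/((j+1)*(j+2))) :=
              Finset.sum_nonneg (fun j _ => by positivity)
            have h3 : (0:ℝ) < K * (4⁻¹:ℝ)^(i+1) := by positivity
            nlinarith
    -- assemble
    have hterm2 : ∀ i : ℕ, μ (A (i+2)) ≤ ENNReal.ofReal (K * (4⁻¹:ℝ)^(i+1)) := by
      intro i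
      rw [hA]
      rw [measure_toMeasurable]
      exact_mod_cast htail i
    calc ∫⁻ ω, ENNReal.ofReal (f ω) ∂μ ≤ ∫⁻ ω, g ω ∂μ := lintegral_mono hpt
      _ = ENNReal.ofReal (3*M) +
          ∫⁻ ω, ∑' i : ℕ, (A (i+2)).indicator (fun _ => ENNReal.ofReal M) ω ∂μ := by
          rw [hg, lintegral_add_left measurable_const, lintegral_const, measure_univ, mul_one]
      _ = ENNReal.ofReal (3*M) + ∑' i : ℕ, ENNReal.ofReal M * μ (A (i+2)) := by
          congr 1
          rw [lintegral_tsum (fun i => (measurable_const.indicator (hAm (i+2))).aemeasurable)]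
          apply tsum_congr
          intro i
          rw [lintegral_indicator (hAm (i+2)), setLIntegral_const, mul_comm]
      _ ≤ ENNReal.ofReal (3*M) + ∑' i : ℕ, ENNReal.ofReal M * ENNReal.ofReal (K * (4⁻¹:ℝ)^(i+1)) := by
          apply add_le_add_right
          exact ENNReal.tsum_le_tsum (fun i => mul_le_mul_right (hterm2 i) _)
      _ ≤ ENNReal.ofReal (3*M) + ENNReal.ofReal M * ENNReal.ofReal K := by
          apply add_le_add_right
          rw [ENNReal.tsum_mul_left]
          apply mul_le_mul_right
          have hsummable : Summable (fun i : ℕ => K * (4⁻¹:ℝ)^(i+1)) := by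
            have : Summable (fun i : ℕ => (K * 4⁻¹) * (4⁻¹:ℝ)^i) :=
              (summable_geometric_of_lt_one (by norm_num) (by norm_num)).mul_left _
            apply this.congr
            intro i
            ring
          rw [← ENNReal.ofReal_tsum_of_nonneg (fun i => by positivity) hsummable]
          apply ENNReal.ofReal_le_ofReal
          have : ∑' i : ℕ, K * (4⁻¹:ℝ)^(i+1) = (K * 4⁻¹) * (1 - 4⁻¹)⁻¹ := by
            rw [← tsum_geometric_of_lt_one (by norm_num : (0:ℝ) ≤ 4⁻¹) (by norm_num),
              ← tsum_mul_left]
            apply tsum_congr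
            intro i
            ring
          rw [this]
          nlinarith
      _ = ENNReal.ofReal ((3+K)*M) := by
          rw [← ENNReal.ofReal_mul hM0, ← ENNReal.ofReal_add (by positivity) ?_]
          · congr 1; ring
          · positivity


/-- Two lemmas of van Handel. Upper: if `P(|X_j| > t|b_j|) ≤ K e^{-t²}` (i.e.
`P(|X_j| > t) ≤ K e^{-t²/b_j²}`), then `E max_j |X_j| ≲_K max_j b_j^↓ √(ln(j+1))`.
Lower: if the `X_j ~ N(0, b_j²)` are independent, then
`E max_j |X_j| ≳ max_j b_j^↓ √(ln(j+1))` with an absolute constant.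
The non-increasing rearrangement is encoded via a sorting permutation `σ`. -/
theorem stmt15 :
    (∀ K : ℝ, 0 < K → ∃ C : ℝ, 0 < C ∧
      ∀ (Ω : Type) (_ : MeasurableSpace Ω) (μ : Measure Ω), IsProbabilityMeasure μ →
      ∀ (n : ℕ) (b : Fin n → ℝ) (X : Fin n → Ω → ℝ),
      (∀ j, ∀ t : ℝ, 0 ≤ t →
        μ {ω | t * |b j| < |X j ω|} ≤ ENNReal.ofReal (K * Real.exp (-t ^ 2))) →
      ∀ σ : Equiv.Perm (Fin n), (∀ j j' : Fin n, j ≤ j' → |b (σ j')| ≤ |b (σ j)|) →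
      ∫⁻ ω, ENNReal.ofReal (⨆ j, |X j ω|) ∂μ ≤
        ENNReal.ofReal (C * ⨆ j : Fin n,
          |b (σ j)| * Real.sqrt (Real.log ((j : ℕ) + 2)))) ∧
    (∃ c : ℝ, 0 < c ∧
      ∀ (Ω : Type) (_ : MeasurableSpace Ω) (μ : Measure Ω), IsProbabilityMeasure μ →
      ∀ (n : ℕ) (b : Fin n → ℝ) (X : Fin n → Ω → ℝ),
      (∀ j, Measurable (X j)) →
      iIndepFun X μ →
      (∀ j, Measure.map (X j) μ = gaussianReal 0 (Real.toNNReal (b j ^ 2))) →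
      ∀ σ : Equiv.Perm (Fin n), (∀ j j' : Fin n, j ≤ j' → |b (σ j')| ≤ |b (σ j)|) →
      ENNReal.ofReal (c * ⨆ j : Fin n,
          |b (σ j)| * Real.sqrt (Real.log ((j : ℕ) + 2))) ≤
        ∫⁻ ω, ENNReal.ofReal (⨆ j, |X j ω|) ∂μ) := ⟨vh_upper, vh_lower⟩
end
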